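/- arXiv:0804.0321 — 2 statements merged into one kernel-verified Lean document; each statement's English description precedes it below -/
import Mathlib

section
/- For every t > 0 and every Borel set A ⊆ [0,∞), the marginal identity ∫_0^1 μ_{y,t}(A) dy = λ(A) holds, where the integral is over y ∈ [0,1) with respect to Lebesgue measure (the single point y = y_C(t) being negligible). -/
open MeasureTheory Filter Topology Real Set NNReal BoundedContinuousFunction

open scoped ENNReal

noncomputable section

/-- monotone on Ico + bounded above ⇒ a.e. measurable on the set -/
lemma auxMonoAEMeas {f : ℝ → ℝ} {a b M : ℝ}
    (hf : MonotoneOn f (Ico a b)) (hM : ∀ y ∈ Ico a b, f y ≤ M) :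
    AEMeasurable f (volume.restrict (Ico a b)) := by
  rcases le_or_gt b a with hba | hab
  · rw [Ico_eq_empty (by exact fun h => absurd hba (not_le.2 h)), Measure.restrict_empty]
    exact aemeasurable_zero_measure
  have ha : a ∈ Ico a b := ⟨le_refl a, hab⟩
  set g : ℝ → ℝ := fun y => if y < a then f a else if y < b then f y else M with hg
  have hmono : Monotone g := by
    intro y1 y2 h12
    by_cases h1 : y1 < a
    · by_cases h2 : y2 < a
      · simp [hg, h1, h2]
      · push_neg at h2
        by_cases h2' : y2 < b
        · simp only [hg, if_pos h1, if_neg (not_lt.2 h2), if_pos h2']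
          exact hf ha ⟨h2, h2'⟩ h2
        · simp only [hg, if_pos h1, if_neg (not_lt.2 h2), if_neg h2']
          exact hM a ha
    · push_neg at h1
      have h2 : ¬ y2 < a := not_lt.2 (h1.trans h12)
      by_cases h1' : y1 < b
      · by_cases h2' : y2 < b
        · simp only [hg, if_neg (not_lt.2 h1), if_neg h2, if_pos h1', if_pos h2']
          exact hf ⟨h1, h1'⟩ ⟨h1.trans h12, h2'⟩ h12
        · simp only [hg, if_neg (not_lt.2 h1), if_neg h2, if_pos h1', if_neg h2']
          exact hM y1 ⟨h1, h1'⟩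
      · have h2' : ¬ y2 < b := fun h => h1' (lt_of_le_of_lt h12 h)
        simp [hg, h1.not_gt, h2, h1', h2', le_refl]
  refine ⟨g, hmono.measurable, ?_⟩
  filter_upwards [self_mem_ae_restrict measurableSet_Ico] with y hy
  simp [hg, (not_lt.2 hy.1), hy.2]

lemma auxMeasSet (μ0 : ℝ → Measure ℝ≥0) [∀ z, IsProbabilityMeasure (μ0 z)]
    (hμ0meas : ∀ g : ℝ≥0 →ᵇ ℝ, AEMeasurable (fun z => ∫ x, g x ∂(μ0 z)) volume)
    {s : Set ℝ≥0} (hs : MeasurableSet s) :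
    AEMeasurable (fun z => μ0 z s) volume := by
  refine MeasurableSpace.induction_on_inter
    (C := fun s _ => AEMeasurable (fun z => μ0 z s) volume)
    BorelSpace.measurable_eq isPiSystem_isOpen ?_ ?_ ?_ ?_ _ hs
  · simp only [measure_empty]; exact aemeasurable_const
  · intro U hU
    simp only [mem_setOf_eq] at hU
    by_cases hcne : Uᶜ.Nonempty
    · -- approximate the indicator by bounded continuous functions
      set d : ℝ≥0 → ℝ := fun x => Metric.infDist x Uᶜ with hd
      have hdc : Continuous d := Metric.continuous_infDist_pt _
      set g : ℕ → ℝ≥0 →ᵇ ℝ := fun n =>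
        BoundedContinuousFunction.ofNormedAddCommGroup
          (fun x => min 1 ((n : ℝ) * d x))
          (continuous_const.min (continuous_const.mul hdc)) 1
          (fun x => by
            have h0 : (0:ℝ) ≤ min 1 ((n:ℝ) * d x) :=
              le_min zero_le_one (mul_nonneg (Nat.cast_nonneg n) Metric.infDist_nonneg)
            rw [Real.norm_eq_abs, abs_le]
            exact ⟨by linarith, min_le_left _ _⟩) with hgdef
      have hgapp : ∀ n x, (g n) x = min 1 ((n:ℝ) * d x) := fun n x => rfl
      have hlim : ∀ z, Tendsto (fun n => ∫ x, (g n) x ∂(μ0 z)) atTop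
          (𝓝 (∫ x, U.indicator (1 : ℝ≥0 → ℝ) x ∂(μ0 z))) := by
        intro z
        refine tendsto_integral_of_dominated_convergence (fun _ => (1:ℝ))
          (fun n => ((g n).continuous).aestronglyMeasurable) (integrable_const 1)
          (fun n => ae_of_all _ fun x => ?_) (ae_of_all _ fun x => ?_)
        · have h0 : (0:ℝ) ≤ min 1 ((n:ℝ) * d x) :=
            le_min zero_le_one (mul_nonneg (Nat.cast_nonneg n) Metric.infDist_nonneg)
          show ‖(g n) x‖ ≤ 1
          rw [hgapp, Real.norm_eq_abs, abs_le]
          exact ⟨by linarith, min_le_left _ _⟩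
        · by_cases hx : x ∈ U
          · have hdx : 0 < d x := by
              rw [hd]
              exact (hU.isClosed_compl.notMem_iff_infDist_pos hcne).1 (by simpa using hx)
            have hev : (fun _ : ℕ => (1:ℝ)) =ᶠ[atTop] fun n : ℕ => ((g n) x : ℝ) := by
              filter_upwards [eventually_ge_atTop (Nat.ceil (1 / d x))] with n hn
              have h1 : 1 / d x ≤ (n : ℝ) := le_trans (Nat.le_ceil _) (by exact_mod_cast hn)
              have h2 : (1:ℝ) ≤ (n : ℝ) * d x := by
                rw [div_le_iff₀ hdx] at h1; linarith
              rw [hgapp, min_eq_left h2]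
            rw [indicator_of_mem hx]
            simpa using Tendsto.congr' hev tendsto_const_nhds
          · have hdx : d x = 0 := Metric.infDist_zero_of_mem (by simpa using hx)
            have hz : ∀ n : ℕ, ((g n) x : ℝ) = 0 := fun n => by
              rw [hgapp, hdx]; simp
            rw [indicator_of_notMem hx]
            simp only [hz]
            exact tendsto_const_nhds
      have haem : AEMeasurable (fun z => ∫ x, U.indicator (1 : ℝ≥0 → ℝ) x ∂(μ0 z)) volume :=
        aemeasurable_of_tendsto_metrizable_ae' (fun n => hμ0meas (g n)) (ae_of_all _ hlim)
      have heq : (fun z => μ0 z U)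
          = fun z => ENNReal.ofReal (∫ x, U.indicator (1 : ℝ≥0 → ℝ) x ∂(μ0 z)) := by
        funext z
        rw [integral_indicator_one hU.measurableSet, measureReal_def, ENNReal.ofReal_toReal (measure_ne_top _ _)]
      rw [heq]
      exact ENNReal.measurable_ofReal.comp_aemeasurable haem
    · -- U = univ
      have : U = univ := by
        rw [← compl_empty_iff]; exact not_nonempty_iff_eq_empty.1 hcne
      simp only [this, measure_univ]
      exact aemeasurable_const
  · intro s hsm hs
    have : ∀ z, μ0 z sᶜ = 1 - μ0 z s := by
      intro z
      rw [measure_compl hsm (measure_ne_top _ _), measure_univ]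
    simp only [this]
    exact aemeasurable_const.sub hs
  · intro f hdisj hfm hf
    have : ∀ z, μ0 z (⋃ i, f i) = ∑' i, μ0 z (f i) := fun z => measure_iUnion hdisj hfm
    simp only [this]
    exact AEMeasurable.ennreal_tsum hf

lemma auxSwap (μ0 : ℝ → Measure ℝ≥0) [∀ z, IsProbabilityMeasure (μ0 z)]
    (hμ0meas : ∀ g : ℝ≥0 →ᵇ ℝ, AEMeasurable (fun z => ∫ x, g x ∂(μ0 z)) volume)
    (lam : Measure ℝ≥0)
    (hlam : ∀ s : Set ℝ≥0, MeasurableSet s →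
      lam s = ∫⁻ y in Ico (0 : ℝ) 1, (μ0 y) s)
    {f : ℝ≥0 → ℝ≥0∞} (hf : Measurable f) :
    AEMeasurable (fun z => ∫⁻ x, f x ∂(μ0 z)) volume ∧
      ∫⁻ x, f x ∂lam = ∫⁻ z in Ico (0 : ℝ) 1, ∫⁻ x, f x ∂(μ0 z) := by
  refine Measurable.ennreal_induction
    (motive := fun f => AEMeasurable (fun z => ∫⁻ x, f x ∂(μ0 z)) volume ∧
      ∫⁻ x, f x ∂lam = ∫⁻ z in Ico (0 : ℝ) 1, ∫⁻ x, f x ∂(μ0 z)) ?_ ?_ ?_ hf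
  · intro c s hs
    have hA := auxMeasSet μ0 hμ0meas hs
    constructor
    · simp only [lintegral_indicator_const hs]
      exact hA.const_mul c
    · simp only [lintegral_indicator_const hs]
      rw [hlam s hs, ← lintegral_const_mul'' c hA.restrict]
  · intro f g hdisj hfm hgm hf hg
    have hptw : ∀ z : ℝ, ∫⁻ x, (f + g) x ∂(μ0 z) = (∫⁻ x, f x ∂(μ0 z)) + ∫⁻ x, g x ∂(μ0 z) :=
      fun z => lintegral_add_left hfm g
    constructor
    · simp only [hptw]; exact hf.1.add hg.1
    · simp only [hptw]
      simp only [Pi.add_apply]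
      rw [lintegral_add_left hfm g, hf.2, hg.2, ← lintegral_add_left' hf.1.restrict _]
  · intro f hfm hmono hP
    have hptw : ∀ z : ℝ, ∫⁻ x, ⨆ n, f n x ∂(μ0 z) = ⨆ n, ∫⁻ x, f n x ∂(μ0 z) :=
      fun z => lintegral_iSup hfm hmono
    constructor
    · simp only [hptw]
      exact AEMeasurable.iSup fun n => (hP n).1
    · simp only [hptw]
      rw [lintegral_iSup hfm hmono]
      simp only [fun n => (hP n).2]
      rw [← lintegral_iSup' (fun n => (hP n).1.restrict) (ae_of_all _ fun z => ?_)]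
      intro n m hnm
      exact lintegral_mono fun x => hmono hnm x

lemma auxExpInt (x u v : ℝ) :
    ∫ s in u..v, x * rexp (-x * s) = rexp (-x * u) - rexp (-x * v) := by
  have h : ∀ s ∈ uIcc u v, HasDerivAt (fun s => -rexp (-x * s)) (x * rexp (-x * s)) s := by
    intro s _
    have h1 : HasDerivAt (fun s : ℝ => -x * s) (-x) s := by
      simpa using (hasDerivAt_id s).const_mul (-x)
    have h2 := (Real.hasDerivAt_exp (-x * s)).comp s h1
    have h3 := h2.neg
    rw [show x * rexp (-x * s) = -(rexp (-x * s) * -x) by ring]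
    exact h3
  have hint : IntervalIntegrable (fun s => x * rexp (-x * s)) volume u v :=
    (continuous_const.mul ((Real.continuous_exp).comp (continuous_const.mul continuous_id))).intervalIntegrable _ _
  rw [intervalIntegral.integral_eq_sub_of_hasDerivAt h hint]
  ring

lemma auxTonelli (lam : Measure ℝ≥0) [IsProbabilityMeasure lam]
    (hmean : Integrable (fun x : ℝ≥0 => (x : ℝ)) lam)
    (B : Set ℝ≥0) (hB : MeasurableSet B) (u v : ℝ) (hu : 0 ≤ u) (huv : u ≤ v) :
    ∫⁻ s in Ioc u v, ENNReal.ofReal (∫ x in B, (x : ℝ) * rexp (-(x : ℝ) * s) ∂lam)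
      = ∫⁻ x in B, ENNReal.ofReal (rexp (-(x : ℝ) * u) - rexp (-(x : ℝ) * v)) ∂lam := by
  have hcont : Continuous (fun p : ℝ × ℝ≥0 => ((p.2 : ℝ) * rexp (-(p.2 : ℝ) * p.1))) := by
    continuity
  have hindm : Measurable (fun p : ℝ × ℝ≥0 =>
      B.indicator (fun x : ℝ≥0 => (x : ℝ) * rexp (-(x : ℝ) * p.1)) p.2) := by
    have : (fun p : ℝ × ℝ≥0 =>
        B.indicator (fun x : ℝ≥0 => (x : ℝ) * rexp (-(x : ℝ) * p.1)) p.2)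
        = (univ ×ˢ B).indicator (fun p : ℝ × ℝ≥0 => ((p.2 : ℝ) * rexp (-(p.2 : ℝ) * p.1))) := by
      funext p
      by_cases hp : p.2 ∈ B
      · rw [indicator_of_mem hp, indicator_of_mem (by simp [hp])]
      · rw [indicator_of_notMem hp, indicator_of_notMem (by simp [hp])]
    rw [this]
    exact hcont.measurable.indicator (MeasurableSet.univ.prod hB)
  -- pointwise: ofReal of the set integral equals an inner lintegral
  have hptw : ∀ s : ℝ, 0 < s →
      ENNReal.ofReal (∫ x in B, (x : ℝ) * rexp (-(x : ℝ) * s) ∂lam)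
        = ∫⁻ x, ENNReal.ofReal
            (B.indicator (fun x : ℝ≥0 => (x : ℝ) * rexp (-(x : ℝ) * s)) x) ∂lam := by
    intro s hs
    rw [← integral_indicator hB]
    refine ofReal_integral_eq_lintegral_ofReal ?_ (ae_of_all _ fun x => ?_)
    · refine Integrable.mono' hmean ?_ (ae_of_all _ fun x => ?_)
      · exact ((hcont.measurable.comp (measurable_const.prodMk measurable_id)).indicator
          hB).aestronglyMeasurable
      · refine le_trans (norm_indicator_le_norm_self _ _) ?_
        rw [Real.norm_eq_abs, abs_of_nonneg (by positivity : (0:ℝ) ≤ (x : ℝ) * rexp (-(x : ℝ) * s))]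
        have hx0 : (0:ℝ) ≤ (x : ℝ) := x.coe_nonneg
        calc (x : ℝ) * rexp (-(x : ℝ) * s) ≤ (x : ℝ) * 1 := by
              refine mul_le_mul_of_nonneg_left ?_ hx0
              exact Real.exp_le_one_iff.2 (by nlinarith)
          _ = (x : ℝ) := mul_one _
    · exact indicator_nonneg (fun x _ => by positivity) x
  -- rewrite the outer integrand a.e. and swap
  have h1 : ∫⁻ s in Ioc u v, ENNReal.ofReal (∫ x in B, (x : ℝ) * rexp (-(x : ℝ) * s) ∂lam)
      = ∫⁻ s in Ioc u v, ∫⁻ x, ENNReal.ofReal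
          (B.indicator (fun x : ℝ≥0 => (x : ℝ) * rexp (-(x : ℝ) * s)) x) ∂lam := by
    refine lintegral_congr_ae ?_
    filter_upwards [self_mem_ae_restrict measurableSet_Ioc] with s hs
    exact hptw s (lt_of_le_of_lt hu hs.1)
  rw [h1]
  have hswap := lintegral_lintegral_swap (μ := volume.restrict (Ioc u v)) (ν := lam)
    (f := fun s x => ENNReal.ofReal
      (B.indicator (fun x : ℝ≥0 => (x : ℝ) * rexp (-(x : ℝ) * s)) x))
    ((ENNReal.measurable_ofReal.comp hindm).aemeasurable)
  rw [hswap]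
  -- inner integral computation
  have hinner : ∀ x : ℝ≥0,
      (∫⁻ s in Ioc u v, ENNReal.ofReal
        (B.indicator (fun x : ℝ≥0 => (x : ℝ) * rexp (-(x : ℝ) * s)) x))
      = B.indicator (fun x : ℝ≥0 =>
          ENNReal.ofReal (rexp (-(x : ℝ) * u) - rexp (-(x : ℝ) * v))) x := by
    intro x
    by_cases hx : x ∈ B
    · simp only [indicator_of_mem hx]
      have hint : IntegrableOn (fun s => (x : ℝ) * rexp (-(x : ℝ) * s)) (Ioc u v) volume := by
        apply Continuous.integrableOn_Ioc
        exact continuous_const.mul ((Real.continuous_exp).comp (continuous_const.mul continuous_id))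
      rw [← ofReal_integral_eq_lintegral_ofReal hint
        (ae_of_all _ fun s => mul_nonneg x.2 (Real.exp_pos _).le)]
      congr 1
      rw [← intervalIntegral.integral_of_le huv]
      exact auxExpInt (x : ℝ) u v
    · simp only [indicator_of_notMem hx]
      simp
  simp only [hinner]
  rw [lintegral_indicator hB]

set_option maxHeartbeats 1000000 in
/-- the marginal identity `∫_0^1 μ_{y,t}(A) dy = λ(A)` for every `t > 0`
and every Borel set `A ⊆ [0,∞)`, where `μ_{y,t}` is given by its densities with respect
to `λ` (for `y < y_C(t)`) and to `μ_{ŷ(y,t),0}` (for `y > y_C(t)`). -/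
theorem stmt16
    (μ0 : ℝ → Measure ℝ≥0) [∀ z, IsProbabilityMeasure (μ0 z)]
    (hμ0meas : ∀ g : ℝ≥0 →ᵇ ℝ, AEMeasurable (fun z => ∫ x, g x ∂(μ0 z)) volume)
    (lam : Measure ℝ≥0) [IsProbabilityMeasure lam]
    (hlam : ∀ s : Set ℝ≥0, MeasurableSet s →
      lam s = ∫⁻ y in Ico (0 : ℝ) 1, (μ0 y) s)
    (h0 : lam {0} = 0)
    (hmean : Integrable (fun x : ℝ≥0 => (x : ℝ)) lam)
    (yC : ℝ → ℝ) (hyC : ∀ t : ℝ, yC t = 1 - ∫ x, rexp (-(x : ℝ) * t) ∂lam)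
    (t0 : ℝ → ℝ)
    (ht0 : ∀ y ∈ Ico (0 : ℝ) 1, 0 ≤ t0 y ∧ yC (t0 y) = y)
    (ht0' : ∀ t : ℝ, 0 ≤ t → t0 (yC t) = t)
    (yCy : ℝ → ℝ → ℝ)
    (hyCy : ∀ y t : ℝ, yCy y t = 1 - ∫ z in y..1, ∫ x, rexp (-(x : ℝ) * t) ∂(μ0 z))
    (yhat : ℝ → ℝ → ℝ)
    (hyhat : ∀ t : ℝ, 0 < t → ∀ y ∈ Ico (yC t) 1,
      yhat y t ∈ Ico (0 : ℝ) 1 ∧ yCy (yhat y t) t = y)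
    (t : ℝ) (ht : 0 < t) (A : Set ℝ≥0) (hA : MeasurableSet A) :
    ∫ y in (0 : ℝ)..1,
        (if y < yC t then
          (∫ x in A, (x : ℝ) * rexp (-(x : ℝ) * t0 y) ∂lam)
            / (∫ x, (x : ℝ) * rexp (-(x : ℝ) * t0 y) ∂lam)
        else
          (∫ x in A, rexp (-(x : ℝ) * t) ∂(μ0 (yhat y t)))
            / (∫ x, rexp (-(x : ℝ) * t) ∂(μ0 (yhat y t))))
      = (lam A).toReal := by
  -- ## shorthand functions
  set F : ℝ → ℝ := fun s => ∫ x, rexp (-(x : ℝ) * s) ∂lam with hF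
  set den : ℝ → ℝ := fun s => ∫ x, (x : ℝ) * rexp (-(x : ℝ) * s) ∂lam with hden
  set num : ℝ → ℝ := fun s => ∫ x in A, (x : ℝ) * rexp (-(x : ℝ) * s) ∂lam with hnum
  -- ## basic integrability
  have hcoe : Continuous (fun x : ℝ≥0 => (x : ℝ)) := NNReal.continuous_coe
  have hexp_cont : ∀ s : ℝ, Continuous fun x : ℝ≥0 => rexp (-(x : ℝ) * s) := fun s =>
    Real.continuous_exp.comp ((hcoe.neg).mul continuous_const)
  have hexp_le1 : ∀ (s : ℝ), 0 ≤ s → ∀ x : ℝ≥0, rexp (-(x : ℝ) * s) ≤ 1 := by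
    intro s hs x
    exact Real.exp_le_one_iff.2 (by nlinarith [x.coe_nonneg])
  have hFint : ∀ s : ℝ, 0 ≤ s → Integrable (fun x : ℝ≥0 => rexp (-(x : ℝ) * s)) lam := by
    intro s hs
    refine Integrable.mono' (integrable_const 1) ((hexp_cont s).aestronglyMeasurable)
      (ae_of_all _ fun x => ?_)
    rw [Real.norm_eq_abs, abs_of_pos (Real.exp_pos _)]
    exact hexp_le1 s hs x
  have hdenint : ∀ s : ℝ, 0 ≤ s →
      Integrable (fun x : ℝ≥0 => (x : ℝ) * rexp (-(x : ℝ) * s)) lam := by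
    intro s hs
    refine Integrable.mono' hmean
      ((hcoe.mul (hexp_cont s)).aestronglyMeasurable) (ae_of_all _ fun x => ?_)
    rw [Real.norm_eq_abs, abs_of_nonneg (by positivity)]
    calc (x : ℝ) * rexp (-(x : ℝ) * s) ≤ (x : ℝ) * 1 :=
        mul_le_mul_of_nonneg_left (hexp_le1 s hs x) x.coe_nonneg
      _ = (x : ℝ) := mul_one _
  -- the set of positive reals has measure one
  have hposset : lam {x : ℝ≥0 | x ≠ 0} = 1 := by
    have : {x : ℝ≥0 | x ≠ 0} = ({0} : Set ℝ≥0)ᶜ := by ext x; simp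
    rw [this, measure_compl (measurableSet_singleton 0) (measure_ne_top _ _), h0, measure_univ]
    simp
  -- ## strict monotonicity facts
  have hFstrict : ∀ s1 s2 : ℝ, 0 ≤ s1 → s1 < s2 → F s2 < F s1 := by
    intro s1 s2 h1 h12
    have hi1 := hFint s1 h1
    have hi2 := hFint s2 (h1.trans h12.le)
    have hsub : 0 < ∫ x, (rexp (-(x : ℝ) * s1) - rexp (-(x : ℝ) * s2)) ∂lam := by
      rw [integral_pos_iff_support_of_nonneg_ae (ae_of_all _ fun x => sub_nonneg.2
        (Real.exp_le_exp.2 (by nlinarith [x.coe_nonneg]))) (hi1.sub hi2)]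
      refine lt_of_lt_of_le (by rw [hposset]; norm_num) (measure_mono fun x hx => ?_)
      have hxpos : (0 : ℝ) < (x : ℝ) := by
        simp only [mem_setOf_eq] at hx
        exact_mod_cast pos_iff_ne_zero.2 hx
      have : rexp (-(x : ℝ) * s2) < rexp (-(x : ℝ) * s1) :=
        Real.exp_lt_exp.2 (by nlinarith)
      simp only [Function.mem_support]
      intro hcon
      rw [sub_eq_zero] at hcon
      exact this.ne' hcon
    rw [integral_sub hi1 hi2] at hsub
    linarith
  have hyCstrict : ∀ s1 s2 : ℝ, 0 ≤ s1 → s1 < s2 → yC s1 < yC s2 := by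
    intro s1 s2 h1 h12
    rw [hyC s1, hyC s2]
    have := hFstrict s1 s2 h1 h12
    show 1 - F s1 < 1 - F s2
    linarith
  have hyCle : ∀ s1 s2 : ℝ, 0 ≤ s1 → s1 ≤ s2 → yC s1 ≤ yC s2 := by
    intro s1 s2 h1 h12
    rcases eq_or_lt_of_le h12 with rfl | hlt
    · exact le_refl _
    · exact (hyCstrict s1 s2 h1 hlt).le
  have hF0 : F 0 = 1 := by
    rw [hF]
    simp
  have hyC0 : yC 0 = 0 := by
    rw [hyC 0]
    have : (fun x : ℝ≥0 => rexp (-(x : ℝ) * 0)) = fun _ => (1:ℝ) := by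
      funext x; simp
    rw [this]
    simp
  have hclt1 : yC t < 1 := by
    rw [hyC t]
    have hFpos : 0 < F t := by
      rw [hF]
      rw [integral_pos_iff_support_of_nonneg_ae (ae_of_all _ fun x => (Real.exp_pos _).le)
        (hFint t ht.le)]
      have : Function.support (fun x : ℝ≥0 => rexp (-(x : ℝ) * t)) = univ := by
        ext x; simp [Function.mem_support, (Real.exp_pos _).ne']
      rw [this, measure_univ]
      norm_num
    linarith
  have hcpos : 0 < yC t := by
    have := hFstrict 0 t (le_refl 0) ht
    rw [hF0] at this
    rw [hyC t]
    linarith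
  -- ## properties of t0 on [0, yC t)
  have hmemt0 : ∀ y ∈ Ico (0:ℝ) (yC t), 0 ≤ t0 y ∧ t0 y < t ∧ yC (t0 y) = y := by
    intro y hy
    have hy1 : y ∈ Ico (0:ℝ) 1 := ⟨hy.1, hy.2.trans hclt1⟩
    obtain ⟨hnn, hyCt0⟩ := ht0 y hy1
    refine ⟨hnn, ?_, hyCt0⟩
    by_contra hcon
    push_neg at hcon
    have := hyCle t (t0 y) ht.le hcon
    rw [hyCt0] at this
    exact absurd hy.2 (not_lt.2 this)
  have ht0mono : MonotoneOn t0 (Ico (0:ℝ) (yC t)) := by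
    intro y1 hy1 y2 hy2 h12
    by_contra hcon
    push_neg at hcon
    have := hyCstrict (t0 y2) (t0 y1) (hmemt0 y2 hy2).1 hcon
    rw [(hmemt0 y1 hy1).2.2, (hmemt0 y2 hy2).2.2] at this
    exact absurd h12 (not_le.2 this)
  have haet0 : AEMeasurable t0 (volume.restrict (Ico (0:ℝ) (yC t))) :=
    auxMonoAEMeas ht0mono (fun y hy => (hmemt0 y hy).2.1.le)
  -- ## measurability of num and den
  have hcont2 : Continuous (fun p : ℝ × ℝ≥0 => ((p.2 : ℝ) * rexp (-(p.2 : ℝ) * p.1))) :=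
    (hcoe.comp continuous_snd).mul (Real.continuous_exp.comp
      (((hcoe.comp continuous_snd).neg).mul continuous_fst))
  have hden_meas : Measurable den :=
    (hcont2.stronglyMeasurable.integral_prod_right').measurable
  have hnum_meas : Measurable num := by
    have h1 : num = fun s => ∫ x,
        ((univ ×ˢ A).indicator (fun p : ℝ × ℝ≥0 => ((p.2 : ℝ) * rexp (-(p.2 : ℝ) * p.1))))
          (s, x) ∂lam := by
      funext s
      show (∫ x in A, (x : ℝ) * rexp (-(x : ℝ) * s) ∂lam) = _
      rw [← integral_indicator hA]
      congr 1
      funext x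
      by_cases hx : x ∈ A
      · rw [indicator_of_mem hx, indicator_of_mem (by simp [hx])]
      · rw [indicator_of_notMem hx, indicator_of_notMem (by simp [hx])]
    rw [h1]
    exact ((hcont2.stronglyMeasurable.indicator
      (MeasurableSet.univ.prod hA)).integral_prod_right').measurable
  -- ## positivity and bounds for den, num
  have hden_pos : ∀ s : ℝ, 0 ≤ s → 0 < den s := by
    intro s hs
    rw [hden]
    rw [integral_pos_iff_support_of_nonneg_ae (ae_of_all _ fun x => by positivity)
      (hdenint s hs)]
    refine lt_of_lt_of_le (by rw [hposset]; norm_num) (measure_mono fun x hx => ?_)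
    have hxpos : (0 : ℝ) < (x : ℝ) := by
      simp only [mem_setOf_eq] at hx
      exact_mod_cast pos_iff_ne_zero.2 hx
    simp only [Function.mem_support]
    positivity
  have hnum_nonneg : ∀ s : ℝ, 0 ≤ num s := by
    intro s
    exact setIntegral_nonneg hA fun x _ => by positivity
  have hnum_le_den : ∀ s : ℝ, 0 ≤ s → num s ≤ den s := by
    intro s hs
    exact setIntegral_le_integral (hdenint s hs) (ae_of_all _ fun x => by positivity)
  have hratio01 : ∀ s : ℝ, 0 ≤ s → num s / den s ∈ Icc (0:ℝ) 1 :=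
    fun s hs => ⟨div_nonneg (hnum_nonneg s) (hden_pos s hs).le,
      div_le_one_of_le₀ (hnum_le_den s hs) (hden_pos s hs).le⟩
  -- ## the pushforward measure identity (part 1)
  set gE : ℝ → ℝ≥0∞ := fun s => ENNReal.ofReal (den s) with hgE
  set ν : Measure ℝ := (volume.restrict (Ioc 0 t)).withDensity gE with hν
  set μmap : Measure ℝ := (volume.restrict (Ico (0:ℝ) (yC t))).map t0 with hμmap
  have hkey : ∀ u v : ℝ, 0 ≤ u → u ≤ v →
      ∫⁻ s in Ioc u v, gE s = ENNReal.ofReal (yC v - yC u) := by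
    intro u v hu huv
    have h1 : ∀ s : ℝ, gE s
        = ENNReal.ofReal (∫ x in (univ : Set ℝ≥0), (x : ℝ) * rexp (-(x : ℝ) * s) ∂lam) := by
      intro s
      rw [hgE, hden]
      simp [setIntegral_univ]
    simp only [h1]
    rw [auxTonelli lam hmean univ MeasurableSet.univ u v hu huv]
    rw [Measure.restrict_univ]
    rw [← ofReal_integral_eq_lintegral_ofReal
      (show Integrable (fun x : ℝ≥0 => rexp (-(x : ℝ) * u) - rexp (-(x : ℝ) * v)) lam from
        (hFint u hu).sub (hFint v (hu.trans huv)))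
      (ae_of_all _ fun x => sub_nonneg.2 (Real.exp_le_exp.2 (by nlinarith [x.coe_nonneg])))]
    rw [integral_sub (hFint u hu) (hFint v (hu.trans huv))]
    rw [hyC u, hyC v]
    congr 1
    ring
  haveI hfinν : IsFiniteMeasure ν := by
    constructor
    rw [hν, withDensity_apply _ MeasurableSet.univ, Measure.restrict_univ]
    have h2 : ∫⁻ s, gE s ∂(volume.restrict (Ioc 0 t)) = ∫⁻ s in Ioc 0 t, gE s := rfl
    rw [h2, hkey 0 t (le_refl 0) ht.le]
    exact ENNReal.ofReal_lt_top
  haveI hfinμmap : IsFiniteMeasure μmap := by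
    constructor
    rw [hμmap, Measure.map_apply_of_aemeasurable haet0 MeasurableSet.univ, preimage_univ,
      Measure.restrict_apply_univ, Real.volume_Ico]
    exact ENNReal.ofReal_lt_top
  have hmapν : μmap = ν := by
    refine Measure.ext_of_Iic μmap ν fun r => ?_
    rw [hμmap, Measure.map_apply_of_aemeasurable haet0 measurableSet_Iic,
      Measure.restrict_apply' measurableSet_Ico]
    rw [hν, withDensity_apply _ measurableSet_Iic,
      Measure.restrict_restrict measurableSet_Iic]
    rcases lt_or_ge r 0 with hr | hr
    · have he1 : t0 ⁻¹' Iic r ∩ Ico (0:ℝ) (yC t) = ∅ := by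
        ext y
        simp only [mem_empty_iff_false, iff_false]
        rintro ⟨hy1, hy2⟩
        exact absurd (le_trans (hmemt0 y hy2).1 hy1) (not_le.2 hr)
      have he2 : Iic r ∩ Ioc 0 t = ∅ := by
        ext s
        simp only [mem_inter_iff, mem_Iic, mem_Ioc, mem_empty_iff_false, iff_false, not_and]
        intro h1 h2
        exfalso
        linarith [h2]
      rw [he1, he2]
      simp
    · have hm0 : 0 ≤ min r t := le_min hr ht.le
      have hmt : min r t ≤ t := min_le_right r t
      have hyCm_le : yC (min r t) ≤ yC t := hyCle _ _ hm0 hmt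
      have hyCm_nonneg : 0 ≤ yC (min r t) := by
        rw [← hyC0]
        exact hyCle 0 _ (le_refl 0) hm0
      have hsub1 : Ico (0:ℝ) (yC (min r t)) ⊆ t0 ⁻¹' Iic r ∩ Ico (0:ℝ) (yC t) := by
        intro y hy
        have hy2 : y ∈ Ico (0:ℝ) (yC t) := ⟨hy.1, lt_of_lt_of_le hy.2 hyCm_le⟩
        refine ⟨?_, hy2⟩
        simp only [mem_preimage, mem_Iic]
        have ht0lt : t0 y < min r t := by
          by_contra hcon
          push_neg at hcon
          have := hyCle (min r t) (t0 y) hm0 hcon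
          rw [(hmemt0 y hy2).2.2] at this
          exact absurd hy.2 (not_lt.2 this)
        exact le_trans ht0lt.le (min_le_left r t)
      have hsub2 : t0 ⁻¹' Iic r ∩ Ico (0:ℝ) (yC t) ⊆ Icc (0:ℝ) (yC (min r t)) := by
        intro y hy
        obtain ⟨hy1, hy2⟩ := hy
        simp only [mem_preimage, mem_Iic] at hy1
        refine ⟨hy2.1, ?_⟩
        have : t0 y ≤ min r t := le_min hy1 (hmemt0 y hy2).2.1.le
        have h3 := hyCle (t0 y) (min r t) (hmemt0 y hy2).1 this
        rw [(hmemt0 y hy2).2.2] at h3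
        exact h3
      have hvol : volume (t0 ⁻¹' Iic r ∩ Ico (0:ℝ) (yC t))
          = ENNReal.ofReal (yC (min r t)) := by
        refine le_antisymm ?_ ?_
        · refine le_trans (measure_mono hsub2) ?_
          rw [Real.volume_Icc]
          simp
        · refine le_trans ?_ (measure_mono hsub1)
          rw [Real.volume_Ico]
          simp
      rw [hvol]
      have hiset : Iic r ∩ Ioc 0 t = Ioc 0 (min r t) := by
        ext s
        simp only [mem_inter_iff, mem_Iic, mem_Ioc, lt_min_iff, le_min_iff]
        constructor
        · rintro ⟨h1, h2, h3⟩
          exact ⟨h2, h1, h3⟩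
        · rintro ⟨h1, h2, h3⟩
          exact ⟨h2, h1, h3⟩
      rw [hiset, hkey 0 (min r t) (le_refl 0) hm0, hyC0, sub_zero]
  -- ## the first piece of the integral
  have mean : ℝ := 0
  have hden_le_mean : ∀ s : ℝ, 0 ≤ s → den s ≤ ∫ x, (x : ℝ) ∂lam := by
    intro s hs
    refine integral_mono (hdenint s hs) hmean fun x => ?_
    calc (x : ℝ) * rexp (-(x : ℝ) * s) ≤ (x : ℝ) * 1 :=
        mul_le_mul_of_nonneg_left (hexp_le1 s hs x) x.coe_nonneg
      _ = (x : ℝ) := mul_one _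
  have hI1 : ∫ y in Ico (0:ℝ) (yC t), num (t0 y) / den (t0 y)
      = ∫ x in A, (1 - rexp (-(x : ℝ) * t)) ∂lam := by
    have hhm : Measurable (fun s => num s / den s) := hnum_meas.div hden_meas
    have e1 : ∫ y in Ico (0:ℝ) (yC t), num (t0 y) / den (t0 y)
        = ∫ s, num s / den s ∂μmap := by
      rw [hμmap]
      exact (integral_map haet0 hhm.aestronglyMeasurable).symm
    rw [e1, hmapν, hν]
    have e2 : gE = (fun s => (((fun s' => (den s').toNNReal) s : ℝ≥0) : ℝ≥0∞)) := rfl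
    rw [e2, integral_withDensity_eq_integral_smul hden_meas.real_toNNReal]
    have e3 : ∫ s in Ioc (0:ℝ) t, (den s).toNNReal • (num s / den s)
        = ∫ s in Ioc (0:ℝ) t, num s := by
      refine setIntegral_congr_fun measurableSet_Ioc fun s hs => ?_
      have hd := hden_pos s hs.1.le
      rw [NNReal.smul_def, Real.coe_toNNReal _ hd.le, smul_eq_mul, mul_comm,
        div_mul_cancel₀ _ hd.ne']
    rw [e3]
    -- now apply Tonelli
    have hnumIntOn : IntegrableOn num (Ioc 0 t) volume := by
      refine Integrable.mono' (integrable_const (∫ x, (x : ℝ) ∂lam))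
        hnum_meas.aestronglyMeasurable.restrict ?_
      filter_upwards [self_mem_ae_restrict measurableSet_Ioc] with s hs
      rw [Real.norm_eq_abs, abs_of_nonneg (hnum_nonneg s)]
      exact le_trans (hnum_le_den s hs.1.le) (hden_le_mean s hs.1.le)
    have hABint : IntegrableOn (fun x : ℝ≥0 => 1 - rexp (-(x : ℝ) * t)) A lam :=
      ((integrable_const 1).sub (hFint t ht.le)).integrableOn
    refine (ENNReal.ofReal_eq_ofReal_iff
      (setIntegral_nonneg measurableSet_Ioc fun s _ => hnum_nonneg s)
      (setIntegral_nonneg hA fun x _ => sub_nonneg.2 (hexp_le1 t ht.le x))).1 ?_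
    rw [ofReal_integral_eq_lintegral_ofReal hnumIntOn
      (Filter.Eventually.filter_mono (ae_mono Measure.restrict_le_self)
        (ae_of_all _ fun s => hnum_nonneg s)),
      ofReal_integral_eq_lintegral_ofReal hABint
      (Filter.Eventually.filter_mono (ae_mono Measure.restrict_le_self)
        (ae_of_all _ fun x => sub_nonneg.2 (hexp_le1 t ht.le x)))]
    have := auxTonelli lam hmean A hA 0 t (le_refl 0) ht.le
    simp only [mul_zero, Real.exp_zero] at this
    exact this
  -- ## part 2 : the function φ and G
  set φ : ℝ → ℝ := fun z => ∫ x, rexp (-(x : ℝ) * t) ∂(μ0 z) with hφ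
  set num₂ : ℝ → ℝ := fun z => ∫ x in A, rexp (-(x : ℝ) * t) ∂(μ0 z) with hnum₂
  have hφint : ∀ z : ℝ, Integrable (fun x : ℝ≥0 => rexp (-(x : ℝ) * t)) (μ0 z) := by
    intro z
    refine Integrable.mono' (integrable_const 1) ((hexp_cont t).aestronglyMeasurable)
      (ae_of_all _ fun x => ?_)
    rw [Real.norm_eq_abs, abs_of_pos (Real.exp_pos _)]
    exact hexp_le1 t ht.le x
  have hφaem : AEMeasurable φ volume := by
    have hb : ∀ x : ℝ≥0, ‖rexp (-(x : ℝ) * t)‖ ≤ 1 := fun x => by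
      rw [Real.norm_eq_abs, abs_of_pos (Real.exp_pos _)]
      exact hexp_le1 t ht.le x
    exact hμ0meas (BoundedContinuousFunction.ofNormedAddCommGroup
      (fun x : ℝ≥0 => rexp (-(x : ℝ) * t)) (hexp_cont t) 1 hb)
  have hφpos : ∀ z : ℝ, 0 < φ z := by
    intro z
    rw [hφ]
    rw [integral_pos_iff_support_of_nonneg_ae (ae_of_all _ fun x => (Real.exp_pos _).le)
      (hφint z)]
    have : Function.support (fun x : ℝ≥0 => rexp (-(x : ℝ) * t)) = univ := by
      ext x; simp [Function.mem_support, (Real.exp_pos _).ne']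
    rw [this, measure_univ]
    norm_num
  have hφle1 : ∀ z : ℝ, φ z ≤ 1 := by
    intro z
    rw [hφ]
    calc ∫ x, rexp (-(x : ℝ) * t) ∂(μ0 z) ≤ ∫ _, (1:ℝ) ∂(μ0 z) :=
        integral_mono (hφint z) (integrable_const 1) (fun x => hexp_le1 t ht.le x)
      _ = 1 := by simp
  have hφii : ∀ u v : ℝ, IntervalIntegrable φ volume u v := by
    intro u v
    rw [intervalIntegrable_iff]
    refine Integrable.mono' ((integrableOn_const_iff (C := (1:ℝ))).2 (Or.inr measure_Ioc_lt_top))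
      hφaem.aestronglyMeasurable.restrict (ae_of_all _ fun z => ?_)
    rw [Real.norm_eq_abs, abs_of_pos (hφpos z)]
    exact hφle1 z
  set G : ℝ → ℝ := fun z => yCy z t with hG
  have hGdiff : ∀ u v : ℝ, G v - G u = ∫ z in u..v, φ z := by
    intro u v
    rw [hG]
    simp only [hyCy]
    have := intervalIntegral.integral_add_adjacent_intervals (hφii u v) (hφii v 1)
    simp only [← hφ] at this ⊢
    linarith
  have hGstrict : StrictMono G := by
    intro u v huv
    have hpos : 0 < ∫ z in u..v, φ z := by
      rw [intervalIntegral.integral_pos_iff_support_of_nonneg_ae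
        (ae_of_all _ fun z => (hφpos z).le) (hφii u v)]
      refine ⟨huv, ?_⟩
      have : Function.support φ = univ := by
        ext z; simp [Function.mem_support, (hφpos z).ne']
      rw [this, univ_inter, Real.volume_Ioc]
      simp [huv]
    have := hGdiff u v
    linarith
  have hG1 : G 1 = 1 := by
    rw [hG]
    simp only [hyCy]
    rw [intervalIntegral.integral_same]
    ring
  have hG0 : G 0 = yC t := by
    have hsw := (auxSwap μ0 hμ0meas lam hlam
      (f := fun x : ℝ≥0 => ENNReal.ofReal (rexp (-(x : ℝ) * t)))
      ((hexp_cont t).measurable.ennreal_ofReal)).2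
    have hl : ∫⁻ x, ENNReal.ofReal (rexp (-(x : ℝ) * t)) ∂lam
        = ENNReal.ofReal (F t) :=
      (ofReal_integral_eq_lintegral_ofReal (hFint t ht.le)
        (ae_of_all _ fun x => (Real.exp_pos _).le)).symm
    have hr : ∀ z : ℝ, ∫⁻ x, ENNReal.ofReal (rexp (-(x : ℝ) * t)) ∂(μ0 z)
        = ENNReal.ofReal (φ z) := fun z =>
      (ofReal_integral_eq_lintegral_ofReal (hφint z)
        (ae_of_all _ fun x => (Real.exp_pos _).le)).symm
    rw [hl] at hsw
    simp only [hr] at hsw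
    have hIntOn : IntegrableOn φ (Ico (0:ℝ) 1) volume := by
      refine Integrable.mono' ((integrableOn_const_iff (C := (1:ℝ))).2 (Or.inr measure_Ico_lt_top))
        hφaem.aestronglyMeasurable.restrict (ae_of_all _ fun z => ?_)
      rw [Real.norm_eq_abs, abs_of_pos (hφpos z)]
      exact hφle1 z
    rw [← ofReal_integral_eq_lintegral_ofReal hIntOn
      (Filter.Eventually.filter_mono (ae_mono Measure.restrict_le_self)
        (ae_of_all _ fun z => (hφpos z).le))] at hsw
    have hFt : F t = ∫ z in Ico (0:ℝ) 1, φ z :=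
      (ENNReal.ofReal_eq_ofReal_iff
        (integral_nonneg fun x => (Real.exp_pos _).le)
        (setIntegral_nonneg measurableSet_Ico fun z _ => (hφpos z).le)).1 hsw
    have h01 : ∫ z in (0:ℝ)..1, φ z = ∫ z in Ico (0:ℝ) 1, φ z := by
      rw [intervalIntegral.integral_of_le zero_le_one,
        Measure.restrict_congr_set Ico_ae_eq_Ioc.symm]
    have := hGdiff 0 1
    rw [hG1, h01, ← hFt] at this
    rw [hyC t]
    linarith
  -- ## properties of yhat
  have hyhat2 : ∀ y ∈ Ico (yC t) 1, yhat y t ∈ Ico (0:ℝ) 1 ∧ G (yhat y t) = y :=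
    fun y hy => hyhat t ht y hy
  have hyhmono : MonotoneOn (fun y => yhat y t) (Ico (yC t) 1) := by
    intro y1 hy1 y2 hy2 h12
    have e1 := (hyhat2 y1 hy1).2
    have e2 := (hyhat2 y2 hy2).2
    refine (hGstrict.le_iff_le).1 ?_
    rw [e1, e2]
    exact h12
  have haeyh : AEMeasurable (fun y => yhat y t) (volume.restrict (Ico (yC t) 1)) :=
    auxMonoAEMeas hyhmono (fun y hy => ((hyhat2 y hy).1.2).le)
  -- ## the second pushforward identity
  set φm : ℝ → ℝ := hφaem.mk φ with hφmdef
  have hφm_meas : Measurable φm := hφaem.measurable_mk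
  have hφm_ae : φ =ᵐ[volume] φm := hφaem.ae_eq_mk
  set ν₂ : Measure ℝ := (volume.restrict (Ioc (0:ℝ) 1)).withDensity
    (fun z => ENNReal.ofReal (φm z)) with hν₂
  set μmap₂ : Measure ℝ := (volume.restrict (Ico (yC t) 1)).map (fun y => yhat y t)
    with hμmap₂
  have hres : ∀ r : ℝ, 0 ≤ r → r ≤ 1 →
      ν₂ (Iic r) = ENNReal.ofReal (G r - yC t) := by
    intro r hr0 hr1
    rw [hν₂, withDensity_apply _ measurableSet_Iic,
      Measure.restrict_restrict measurableSet_Iic]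
    have hset : Iic r ∩ Ioc (0:ℝ) 1 = Ioc 0 r := by
      ext z
      simp only [mem_inter_iff, mem_Iic, mem_Ioc]
      constructor
      · rintro ⟨h1, h2, h3⟩; exact ⟨h2, h1⟩
      · rintro ⟨h1, h2⟩; exact ⟨h2, h1, h2.trans hr1⟩
    rw [hset]
    have hcongr : ∫⁻ z in Ioc (0:ℝ) r, ENNReal.ofReal (φm z)
        = ∫⁻ z in Ioc (0:ℝ) r, ENNReal.ofReal (φ z) := by
      refine lintegral_congr_ae ?_
      filter_upwards [ae_restrict_of_ae hφm_ae.symm] with z hz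
      rw [hz]
    rw [hcongr, ← ofReal_integral_eq_lintegral_ofReal (hφii 0 r).1
      (Filter.Eventually.filter_mono (ae_mono Measure.restrict_le_self)
        (ae_of_all _ fun z => (hφpos z).le))]
    congr 1
    have := hGdiff 0 r
    rw [hG0] at this
    rw [← intervalIntegral.integral_of_le hr0]
    linarith
  haveI hfinν₂ : IsFiniteMeasure ν₂ := by
    constructor
    rw [hν₂, withDensity_apply _ MeasurableSet.univ, Measure.restrict_univ]
    calc ∫⁻ z in Ioc (0:ℝ) 1, ENNReal.ofReal (φm z)
        ≤ ∫⁻ _ in Ioc (0:ℝ) 1, (1 : ℝ≥0∞) := by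
          refine lintegral_mono_ae ?_
          filter_upwards [ae_restrict_of_ae hφm_ae.symm] with z hz
          rw [hz]
          exact ENNReal.ofReal_le_one.2 (hφle1 z)
      _ < ⊤ := by
          rw [setLIntegral_const]
          exact ENNReal.mul_lt_top ENNReal.one_lt_top measure_Ioc_lt_top
  haveI hfinμmap₂ : IsFiniteMeasure μmap₂ := by
    constructor
    rw [hμmap₂, Measure.map_apply_of_aemeasurable haeyh MeasurableSet.univ, preimage_univ,
      Measure.restrict_apply_univ, Real.volume_Ico]
    exact ENNReal.ofReal_lt_top
  have hmap2 : μmap₂ = ν₂ := by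
    refine Measure.ext_of_Iic μmap₂ ν₂ fun r => ?_
    rw [hμmap₂, Measure.map_apply_of_aemeasurable haeyh measurableSet_Iic,
      Measure.restrict_apply' measurableSet_Ico]
    rcases lt_or_ge r 0 with hr | hr0
    · have he1 : (fun y => yhat y t) ⁻¹' Iic r ∩ Ico (yC t) 1 = ∅ := by
        ext y
        simp only [mem_empty_iff_false, iff_false]
        rintro ⟨hy1, hy2⟩
        exact absurd (le_trans (hyhat2 y hy2).1.1 hy1) (not_le.2 hr)
      rw [he1]
      rw [hν₂, withDensity_apply _ measurableSet_Iic,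
        Measure.restrict_restrict measurableSet_Iic]
      have he2 : Iic r ∩ Ioc (0:ℝ) 1 = ∅ := by
        ext z
        simp only [mem_inter_iff, mem_Iic, mem_Ioc, mem_empty_iff_false, iff_false, not_and]
        intro h1 h2
        exfalso
        linarith [h2]
      rw [he2]
      simp
    · rcases lt_or_ge r 1 with hr1 | hr1
      · -- 0 ≤ r < 1
        have hGr_lt : G r < 1 := by rw [← hG1]; exact hGstrict hr1
        have hGr_ge : yC t ≤ G r := by rw [← hG0]; exact hGstrict.monotone hr0
        have hsub1 : Ico (yC t) (G r) ⊆
            (fun y => yhat y t) ⁻¹' Iic r ∩ Ico (yC t) 1 := by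
          intro y hy
          have hy2 : y ∈ Ico (yC t) 1 := ⟨hy.1, hy.2.trans_le hGr_lt.le⟩
          refine ⟨?_, hy2⟩
          simp only [mem_preimage, mem_Iic]
          have : G (yhat y t) < G r := by rw [(hyhat2 y hy2).2]; exact hy.2
          exact (hGstrict.lt_iff_lt.1 this).le
        have hsub2 : (fun y => yhat y t) ⁻¹' Iic r ∩ Ico (yC t) 1 ⊆
            Icc (yC t) (G r) := by
          rintro y ⟨hy1, hy2⟩
          simp only [mem_preimage, mem_Iic] at hy1
          refine ⟨hy2.1, ?_⟩
          have := hGstrict.monotone hy1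
          rw [(hyhat2 y hy2).2] at this
          exact this
        have hvol : volume ((fun y => yhat y t) ⁻¹' Iic r ∩ Ico (yC t) 1)
            = ENNReal.ofReal (G r - yC t) := by
          refine le_antisymm ?_ ?_
          · refine le_trans (measure_mono hsub2) ?_
            rw [Real.volume_Icc]
          · refine le_trans ?_ (measure_mono hsub1)
            rw [Real.volume_Ico]
        rw [hvol, hres r hr0 hr1.le]
      · -- r ≥ 1
        have he1 : (fun y => yhat y t) ⁻¹' Iic r ∩ Ico (yC t) 1 = Ico (yC t) 1 := by
          ext y
          simp only [mem_inter_iff, mem_preimage, mem_Iic]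
          constructor
          · rintro ⟨_, hy⟩; exact hy
          · intro hy
            exact ⟨le_trans ((hyhat2 y hy).1.2).le hr1, hy⟩
        rw [he1, Real.volume_Ico]
        rw [hν₂, withDensity_apply _ measurableSet_Iic,
          Measure.restrict_restrict measurableSet_Iic]
        have he2 : Iic r ∩ Ioc (0:ℝ) 1 = Ioc 0 1 := by
          ext z
          simp only [mem_inter_iff, mem_Iic, mem_Ioc]
          constructor
          · rintro ⟨h1, h2⟩; exact h2
          · intro h2; exact ⟨h2.2.trans hr1, h2⟩
        rw [he2]
        have hcongr : ∫⁻ z in Ioc (0:ℝ) 1, ENNReal.ofReal (φm z)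
            = ∫⁻ z in Ioc (0:ℝ) 1, ENNReal.ofReal (φ z) := by
          refine lintegral_congr_ae ?_
          filter_upwards [ae_restrict_of_ae hφm_ae.symm] with z hz
          rw [hz]
        rw [hcongr, ← ofReal_integral_eq_lintegral_ofReal (hφii 0 1).1
          (Filter.Eventually.filter_mono (ae_mono Measure.restrict_le_self)
            (ae_of_all _ fun z => (hφpos z).le))]
        congr 1
        have := hGdiff 0 1
        rw [hG0, hG1] at this
        rw [← intervalIntegral.integral_of_le zero_le_one]
        linarith
  -- ## properties of num₂
  have hindA_meas : Measurable
      (A.indicator fun x : ℝ≥0 => ENNReal.ofReal (rexp (-(x : ℝ) * t))) :=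
    ((hexp_cont t).measurable.ennreal_ofReal).indicator hA
  have hswA := auxSwap μ0 hμ0meas lam hlam
    (f := A.indicator fun x : ℝ≥0 => ENNReal.ofReal (rexp (-(x : ℝ) * t))) hindA_meas
  have hofnum₂ : ∀ z : ℝ, ENNReal.ofReal (num₂ z)
      = ∫⁻ x, (A.indicator fun x : ℝ≥0 => ENNReal.ofReal (rexp (-(x : ℝ) * t))) x
          ∂(μ0 z) := by
    intro z
    rw [lintegral_indicator hA]
    exact ofReal_integral_eq_lintegral_ofReal (hφint z).integrableOn
      (Filter.Eventually.filter_mono (ae_mono Measure.restrict_le_self)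
        (ae_of_all _ fun x => (Real.exp_pos _).le))
  have hnum₂nonneg : ∀ z : ℝ, 0 ≤ num₂ z := fun z =>
    setIntegral_nonneg hA fun x _ => (Real.exp_pos _).le
  have hnum₂le : ∀ z : ℝ, num₂ z ≤ φ z := fun z =>
    setIntegral_le_integral (hφint z) (ae_of_all _ fun x => (Real.exp_pos _).le)
  have hnum₂aem : AEMeasurable num₂ volume := by
    have h1 : AEMeasurable (fun z => ENNReal.ofReal (num₂ z)) volume := by
      simp only [hofnum₂]
      exact hswA.1
    have h2 : num₂ = fun z => (ENNReal.ofReal (num₂ z)).toReal := by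
      funext z
      rw [ENNReal.toReal_ofReal (hnum₂nonneg z)]
    rw [h2]
    exact h1.ennreal_toReal
  have hH01 : ∀ z : ℝ, num₂ z / φ z ∈ Icc (0:ℝ) 1 := fun z =>
    ⟨div_nonneg (hnum₂nonneg z) (hφpos z).le,
      div_le_one_of_le₀ (hnum₂le z) (hφpos z).le⟩
  have hswap2 : ∫ z in Ioc (0:ℝ) 1, num₂ z = ∫ x in A, rexp (-(x : ℝ) * t) ∂lam := by
    have hIntnum₂ : IntegrableOn num₂ (Ioc (0:ℝ) 1) volume := by
      refine Integrable.mono' ((integrableOn_const_iff (C := (1:ℝ))).2 (Or.inr measure_Ioc_lt_top))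
        hnum₂aem.aestronglyMeasurable.restrict (ae_of_all _ fun z => ?_)
      rw [Real.norm_eq_abs, abs_of_nonneg (hnum₂nonneg z)]
      exact le_trans (hnum₂le z) (hφle1 z)
    refine (ENNReal.ofReal_eq_ofReal_iff
      (setIntegral_nonneg measurableSet_Ioc fun z _ => hnum₂nonneg z)
      (setIntegral_nonneg hA fun x _ => (Real.exp_pos _).le)).1 ?_
    rw [ofReal_integral_eq_lintegral_ofReal hIntnum₂
      (Filter.Eventually.filter_mono (ae_mono Measure.restrict_le_self)
        (ae_of_all _ fun z => hnum₂nonneg z))]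
    rw [Measure.restrict_congr_set Ico_ae_eq_Ioc.symm]
    simp only [hofnum₂]
    rw [← hswA.2, lintegral_indicator hA,
      ← ofReal_integral_eq_lintegral_ofReal (hFint t ht.le).integrableOn
      (Filter.Eventually.filter_mono (ae_mono Measure.restrict_le_self)
        (ae_of_all _ fun x => (Real.exp_pos _).le))]
  -- ## the second piece of the integral
  have hac : ν₂ ≪ volume :=
    (withDensity_absolutelyContinuous _ _).trans
      (Measure.restrict_le_self.absolutelyContinuous)
  have hHaem : AEMeasurable (fun z => num₂ z / φ z) volume := hnum₂aem.div hφaem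
  have hHmap : AEMeasurable (fun z => num₂ z / φ z) μmap₂ := by
    rw [hmap2]
    exact hHaem.mono_ac hac
  have hI2 : ∫ y in Ico (yC t) 1, num₂ (yhat y t) / φ (yhat y t)
      = ∫ x in A, rexp (-(x : ℝ) * t) ∂lam := by
    have e1 : ∫ y in Ico (yC t) 1, num₂ (yhat y t) / φ (yhat y t)
        = ∫ z, num₂ z / φ z ∂μmap₂ := by
      rw [hμmap₂]
      exact (integral_map haeyh (hμmap₂ ▸ hHmap).aestronglyMeasurable).symm
    rw [e1, hmap2, hν₂]
    have e2 : (fun z => ENNReal.ofReal (φm z))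
        = (fun z => (((fun z' => (φm z').toNNReal) z : ℝ≥0) : ℝ≥0∞)) := rfl
    rw [e2, integral_withDensity_eq_integral_smul hφm_meas.real_toNNReal]
    have e3 : ∫ z in Ioc (0:ℝ) 1, (φm z).toNNReal • (num₂ z / φ z)
        = ∫ z in Ioc (0:ℝ) 1, num₂ z := by
      refine integral_congr_ae ?_
      filter_upwards [ae_restrict_of_ae hφm_ae.symm] with z hz
      rw [hz, NNReal.smul_def, Real.coe_toNNReal _ (hφpos z).le, smul_eq_mul, mul_comm,
        div_mul_cancel₀ _ (hφpos z).ne']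
    rw [e3, hswap2]
  -- ## final assembly
  have hABint : IntegrableOn (fun x : ℝ≥0 => 1 - rexp (-(x : ℝ) * t)) A lam :=
    ((integrable_const 1).sub (hFint t ht.le)).integrableOn
  have hrw1 : volume.restrict (Ioc (0:ℝ) (yC t)) = volume.restrict (Ico (0:ℝ) (yC t)) :=
    Measure.restrict_congr_set Ico_ae_eq_Ioc.symm
  have hrw2 : volume.restrict (Ioc (yC t) 1) = volume.restrict (Ico (yC t) 1) :=
    Measure.restrict_congr_set Ico_ae_eq_Ioc.symm
  have hIntP1 : Integrable (fun y => num (t0 y) / den (t0 y))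
      (volume.restrict (Ico (0:ℝ) (yC t))) := by
    refine Integrable.mono' ((integrableOn_const_iff (C := (1:ℝ))).2 (Or.inr measure_Ico_lt_top))
      (((hnum_meas.div hden_meas).comp_aemeasurable haet0).aestronglyMeasurable)
      ?_
    filter_upwards [self_mem_ae_restrict measurableSet_Ico] with y hy
    have h01 := hratio01 (t0 y) (hmemt0 y hy).1
    rw [Real.norm_eq_abs, abs_of_nonneg h01.1]
    exact h01.2
  have hIntP2 : Integrable (fun y => num₂ (yhat y t) / φ (yhat y t))
      (volume.restrict (Ico (yC t) 1)) := by
    refine Integrable.mono' ((integrableOn_const_iff (C := (1:ℝ))).2 (Or.inr measure_Ico_lt_top))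
      ((hμmap₂ ▸ hHmap).comp_aemeasurable haeyh).aestronglyMeasurable
      (ae_of_all _ fun y => ?_)
    have h01 := hH01 (yhat y t)
    rw [Real.norm_eq_abs, abs_of_nonneg h01.1]
    exact h01.2
  rw [intervalIntegral.integral_of_le zero_le_one]
  have hsplit : Ioc (0:ℝ) 1 = Ioc 0 (yC t) ∪ Ioc (yC t) 1 :=
    (Ioc_union_Ioc_eq_Ioc hcpos.le hclt1.le).symm
  rw [hsplit]
  have hint1 : IntegrableOn (fun y =>
      if y < yC t then
        (∫ x in A, (x : ℝ) * rexp (-(x : ℝ) * t0 y) ∂lam)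
          / (∫ x, (x : ℝ) * rexp (-(x : ℝ) * t0 y) ∂lam)
      else
        (∫ x in A, rexp (-(x : ℝ) * t) ∂(μ0 (yhat y t)))
          / (∫ x, rexp (-(x : ℝ) * t) ∂(μ0 (yhat y t)))) (Ioc (0:ℝ) (yC t)) volume := by
    rw [IntegrableOn, hrw1]
    refine hIntP1.congr ?_
    filter_upwards [self_mem_ae_restrict measurableSet_Ico] with y hy
    rw [if_pos hy.2]
  have hint2 : IntegrableOn (fun y =>
      if y < yC t then
        (∫ x in A, (x : ℝ) * rexp (-(x : ℝ) * t0 y) ∂lam)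
          / (∫ x, (x : ℝ) * rexp (-(x : ℝ) * t0 y) ∂lam)
      else
        (∫ x in A, rexp (-(x : ℝ) * t) ∂(μ0 (yhat y t)))
          / (∫ x, rexp (-(x : ℝ) * t) ∂(μ0 (yhat y t)))) (Ioc (yC t) 1) volume := by
    rw [IntegrableOn, hrw2]
    refine hIntP2.congr ?_
    filter_upwards [self_mem_ae_restrict measurableSet_Ico] with y hy
    rw [if_neg (not_lt.2 hy.1)]
  rw [setIntegral_union (Ioc_disjoint_Ioc_of_le le_rfl) measurableSet_Ioc hint1 hint2]
  have hpc1 : ∫ y in Ioc (0:ℝ) (yC t), (if y < yC t then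
        (∫ x in A, (x : ℝ) * rexp (-(x : ℝ) * t0 y) ∂lam)
          / (∫ x, (x : ℝ) * rexp (-(x : ℝ) * t0 y) ∂lam)
      else
        (∫ x in A, rexp (-(x : ℝ) * t) ∂(μ0 (yhat y t)))
          / (∫ x, rexp (-(x : ℝ) * t) ∂(μ0 (yhat y t))))
      = ∫ x in A, (1 - rexp (-(x : ℝ) * t)) ∂lam := by
    rw [show (∫ y in Ioc (0:ℝ) (yC t), (if y < yC t then
        (∫ x in A, (x : ℝ) * rexp (-(x : ℝ) * t0 y) ∂lam)
          / (∫ x, (x : ℝ) * rexp (-(x : ℝ) * t0 y) ∂lam)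
      else
        (∫ x in A, rexp (-(x : ℝ) * t) ∂(μ0 (yhat y t)))
          / (∫ x, rexp (-(x : ℝ) * t) ∂(μ0 (yhat y t)))))
      = ∫ y in Ico (0:ℝ) (yC t), (if y < yC t then
        (∫ x in A, (x : ℝ) * rexp (-(x : ℝ) * t0 y) ∂lam)
          / (∫ x, (x : ℝ) * rexp (-(x : ℝ) * t0 y) ∂lam)
      else
        (∫ x in A, rexp (-(x : ℝ) * t) ∂(μ0 (yhat y t)))
          / (∫ x, rexp (-(x : ℝ) * t) ∂(μ0 (yhat y t)))) from by rw [setIntegral_congr_set Ico_ae_eq_Ioc.symm]]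
    rw [← hI1]
    refine setIntegral_congr_fun measurableSet_Ico fun y hy => ?_
    rw [if_pos hy.2]
  have hpc2 : ∫ y in Ioc (yC t) 1, (if y < yC t then
        (∫ x in A, (x : ℝ) * rexp (-(x : ℝ) * t0 y) ∂lam)
          / (∫ x, (x : ℝ) * rexp (-(x : ℝ) * t0 y) ∂lam)
      else
        (∫ x in A, rexp (-(x : ℝ) * t) ∂(μ0 (yhat y t)))
          / (∫ x, rexp (-(x : ℝ) * t) ∂(μ0 (yhat y t))))
      = ∫ x in A, rexp (-(x : ℝ) * t) ∂lam := by
    rw [show (∫ y in Ioc (yC t) 1, (if y < yC t then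
        (∫ x in A, (x : ℝ) * rexp (-(x : ℝ) * t0 y) ∂lam)
          / (∫ x, (x : ℝ) * rexp (-(x : ℝ) * t0 y) ∂lam)
      else
        (∫ x in A, rexp (-(x : ℝ) * t) ∂(μ0 (yhat y t)))
          / (∫ x, rexp (-(x : ℝ) * t) ∂(μ0 (yhat y t)))))
      = ∫ y in Ico (yC t) 1, (if y < yC t then
        (∫ x in A, (x : ℝ) * rexp (-(x : ℝ) * t0 y) ∂lam)
          / (∫ x, (x : ℝ) * rexp (-(x : ℝ) * t0 y) ∂lam)
      else
        (∫ x in A, rexp (-(x : ℝ) * t) ∂(μ0 (yhat y t)))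
          / (∫ x, rexp (-(x : ℝ) * t) ∂(μ0 (yhat y t)))) from by rw [setIntegral_congr_set Ico_ae_eq_Ioc.symm]]
    rw [← hI2]
    refine setIntegral_congr_fun measurableSet_Ico fun y hy => ?_
    rw [if_neg (not_lt.2 hy.1)]
  rw [hpc1, hpc2]
  rw [← integral_add hABint (hFint t ht.le).integrableOn]
  rw [show (fun x : ℝ≥0 => (1 - rexp (-(x : ℝ) * t)) + rexp (-(x : ℝ) * t))
    = fun _ : ℝ≥0 => (1:ℝ) from funext fun x => by ring]
  rw [setIntegral_const]
  rw [smul_eq_mul, mul_one, measureReal_def]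
end
end

section
/- Fix t > 0 and y with y_C(t) < y < 1, and on the event {y > y_C^{(N)}(t)} define the random variable ŷ^{(N)}(y,t) = inf{ y_{i,0}^{(N)} : i ∈ {1,…,N}, Y_i^{(N)}(t) > y }. Then for every ε > 0, P( y > y_C^{(N)}(t) and |ŷ^{(N)}(y,t) − ŷ(y,t)| > ε ) → 0 as N → ∞; that is, ŷ^{(N)}(y,t) converges to the deterministic value ŷ(y,t) in probability. -/
open MeasureTheory ProbabilityTheory Filter Topology Real Set NNReal BoundedContinuousFunction

noncomputable section

/-- The stochastic ranking process of `N` particles on a probability space `Ω`: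
jump rates `w i > 0`, initial ranks `x0` (a permutation of `1,…,N`), jump times
`τ i j` with `τ i 0 = 0`, strictly increasing in `j` (a.s.), independent among
particles, with i.i.d. increments that are exponential of rate `w i`; together
with the ranking process `X`, defined by the explicit formulas of the paper. -/
structure RankingSystem (Ω : Type) [MeasureSpace Ω] (N : ℕ) where
  /-- jump rates -/
  w : Fin N → ℝ≥0
  w_pos : ∀ i, 0 < w i
  /-- initial ranks -/
  x0 : Fin N → ℕ
  /-- the initial ranks form a permutation of `1,…,N` -/
  x0_perm : ∀ k ∈ Finset.Icc 1 N, ∃! i : Fin N, x0 i = k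
  /-- jump times; `τ i j` is the `j`-th jump time of particle `i` -/
  τ : Fin N → ℕ → Ω → ℝ
  τ_meas : ∀ i j, Measurable fun ω => τ i j ω
  τ_zero : ∀ i ω, τ i 0 ω = 0
  τ_mono : ∀ᵐ ω ∂(ℙ : Measure Ω), ∀ i, StrictMono fun j => τ i j ω
  /-- independence of the jump-time sequences of different particles -/
  indep : iIndepFun
    (fun i ω => fun j => τ i j ω) (ℙ : Measure Ω)
  /-- independence of the increments of the jump times of each particle -/
  incr_indep : ∀ i, iIndepFun
    (fun j ω => τ i (j + 1) ω - τ i j ω) (ℙ : Measure Ω)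
  /-- each increment is exponentially distributed with rate `w i` -/
  incr_exp : ∀ i j (t : ℝ), 0 ≤ t →
    (ℙ : Measure Ω) {ω | τ i (j + 1) ω - τ i j ω ≤ t}
      = ENNReal.ofReal (1 - Real.exp (-(w i : ℝ) * t))
  /-- the ranking of particle `i` at time `t` -/
  X : Fin N → ℝ → Ω → ℕ
  /-- before the first jump of `i`:
  `X_i(t) = x_{i,0} + #{i' : x_{i',0} > x_{i,0}, τ_{i',1} ≤ t}` -/
  X_def1 : ∀ ω i (t : ℝ), 0 ≤ t → t < τ i 1 ω →
    X i t ω = x0 i + Set.ncard {i' : Fin N | x0 i < x0 i' ∧ τ i' 1 ω ≤ t}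
  /-- at each jump time the particle goes to the top: `X_i(τ_{i,j}) = 1` -/
  X_def2 : ∀ ω i (j : ℕ), 1 ≤ j → X i (τ i j ω) ω = 1
  /-- between consecutive jumps:
  `X_i(t) = #{i' : ∃ j' ≥ 1, τ_{i,j} < τ_{i',j'} ≤ t}` for `τ_{i,j} < t < τ_{i,j+1}` -/
  X_def3 : ∀ ω i (j : ℕ) (t : ℝ), 1 ≤ j → τ i j ω < t → t < τ i (j + 1) ω →
    X i t ω = Set.ncard
      {i' : Fin N | ∃ j' : ℕ, 1 ≤ j' ∧ τ i j ω < τ i' j' ω ∧ τ i' j' ω ≤ t}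

/-- the scaled position `Y_i^{(N)}(t) = (X_i^{(N)}(t) - 1)/N` -/
def RankingSystem.Y {Ω : Type} [MeasureSpace Ω] {N : ℕ} (R : RankingSystem Ω N)
    (i : Fin N) (t : ℝ) (ω : Ω) : ℝ :=
  ((R.X i t ω : ℝ) - 1) / N

/-- the scaled boundary position `y_C^{(N)}(t) = (1/N) Σ_i χ_{τ_{i,1} ≤ t}` -/
def RankingSystem.yCN {Ω : Type} [MeasureSpace Ω] {N : ℕ} (R : RankingSystem Ω N)
    (t : ℝ) (ω : Ω) : ℝ :=
  (N : ℝ)⁻¹ * ∑ i : Fin N, if R.τ i 1 ω ≤ t then (1 : ℝ) else 0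

/-- the scaled initial position `y_{i,0}^{(N)} = (x_{i,0}^{(N)} - 1)/N` -/
def RankingSystem.y0 {Ω : Type} [MeasureSpace Ω] {N : ℕ} (R : RankingSystem Ω N)
    (i : Fin N) : ℝ :=
  ((R.x0 i : ℝ) - 1) / N

namespace RankingSystem
variable {Ω : Type} [MeasureSpace Ω] {N : ℕ} (R : RankingSystem Ω N)

lemma x0_mem (i : Fin N) : R.x0 i ∈ Finset.Icc 1 N := by
  classical
  have hsurj := Finset.surj_on_of_inj_on_of_card_le
    (s := Finset.Icc 1 N) (t := (Finset.univ : Finset (Fin N)))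
    (f := fun k hk => (R.x0_perm k hk).exists.choose)
    (fun k hk => Finset.mem_univ _)
    (fun k k' hk hk' h => by
      have h1 := (R.x0_perm k hk).exists.choose_spec
      have h2 := (R.x0_perm k' hk').exists.choose_spec
      rw [← h1, ← h2, h])
    (by simp)
  rcases hsurj i (Finset.mem_univ i) with ⟨k, hk, hik⟩
  have hs := (R.x0_perm k hk).exists.choose_spec
  rw [hik, hs]
  exact hk

lemma x0_inj : Function.Injective R.x0 := by
  intro i j hij
  have hk : R.x0 i ∈ Finset.Icc 1 N := R.x0_mem i
  exact (R.x0_perm (R.x0 i) hk).unique rfl hij.symm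

lemma card_gt (i : Fin N) :
    (Finset.univ.filter (fun i' => R.x0 i < R.x0 i')).card = N - R.x0 i := by
  classical
  have himg : Finset.univ.image R.x0 = Finset.Icc 1 N := by
    apply Finset.eq_of_subset_of_card_le
    · intro k hk
      rcases Finset.mem_image.1 hk with ⟨i', _, rfl⟩
      exact R.x0_mem i'
    · rw [Finset.card_image_of_injective _ R.x0_inj]
      simp
  have : (Finset.univ.filter (fun i' => R.x0 i < R.x0 i')).card
      = ((Finset.Icc 1 N).filter (fun k => R.x0 i < k)).card := by
    rw [← himg, Finset.filter_image]
    rw [Finset.card_image_of_injective _ R.x0_inj]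
  rw [this]
  have h1 : 1 ≤ R.x0 i ∧ R.x0 i ≤ N := Finset.mem_Icc.1 (R.x0_mem i)
  have : (Finset.Icc 1 N).filter (fun k => R.x0 i < k) = Finset.Icc (R.x0 i + 1) N := by
    ext k
    simp only [Finset.mem_filter, Finset.mem_Icc]
    omega
  rw [this, Nat.card_Icc]
  omega

variable [IsProbabilityMeasure (ℙ : Measure Ω)]

lemma meas_first_jump (i : Fin N) {t : ℝ} (ht : 0 ≤ t) :
    (ℙ : Measure Ω) {ω | t < R.τ i 1 ω} = ENNReal.ofReal (rexp (-(R.w i : ℝ) * t)) := by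
  have hle : (ℙ : Measure Ω) {ω | R.τ i 1 ω ≤ t} = ENNReal.ofReal (1 - rexp (-(R.w i : ℝ) * t)) := by
    have := R.incr_exp i 0 t ht
    simpa [R.τ_zero i] using this
  have hms : MeasurableSet {ω | R.τ i 1 ω ≤ t} := measurableSet_le (R.τ_meas i 1) measurable_const
  have hcompl : {ω | t < R.τ i 1 ω} = {ω | R.τ i 1 ω ≤ t}ᶜ := by
    ext ω; simp [not_le]
  rw [hcompl, measure_compl hms (measure_ne_top _ _), hle, measure_univ]
  have h1 : rexp (-(R.w i : ℝ) * t) ≤ 1 := by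
    apply Real.exp_le_one_iff.2
    have : (0:ℝ) ≤ (R.w i : ℝ) * t := mul_nonneg (R.w i).2 ht
    linarith
  have h2 : (0:ℝ) < rexp (-(R.w i : ℝ) * t) := Real.exp_pos _
  rw [← ENNReal.ofReal_one, ← ENNReal.ofReal_sub _ (by linarith)]
  ring_nf

lemma ind_meas (i : Fin N) (t : ℝ) :
    Measurable (fun ω => if t < R.τ i 1 ω then (1:ℝ) else 0) := by
  exact Measurable.ite (measurableSet_lt measurable_const (R.τ_meas i 1))
    measurable_const measurable_const

lemma ind_integral (i : Fin N) {t : ℝ} (ht : 0 ≤ t) :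
    ∫ ω, (if t < R.τ i 1 ω then (1:ℝ) else 0) ∂(ℙ : Measure Ω) = rexp (-(R.w i : ℝ) * t) := by
  have hms : MeasurableSet {ω | t < R.τ i 1 ω} :=
    measurableSet_lt measurable_const (R.τ_meas i 1)
  have : (fun ω => if t < R.τ i 1 ω then (1:ℝ) else 0)
      = Set.indicator {ω | t < R.τ i 1 ω} (fun _ => (1:ℝ)) := by
    ext ω; by_cases h : t < R.τ i 1 ω <;> simp [Set.indicator_apply, h]
  rw [this, integral_indicator_const (1:ℝ) hms, measureReal_def, R.meas_first_jump i ht]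
  rw [ENNReal.toReal_ofReal (Real.exp_pos _).le]
  simp

lemma ind_indep (t : ℝ) (a : Fin N → ℝ) :
    iIndepFun
      (fun i ω => (N:ℝ)⁻¹ * (a i * (if t < R.τ i 1 ω then (1:ℝ) else 0))) (ℙ : Measure Ω) := by
  have h := R.indep.comp
    (g := fun i (u : ℕ → ℝ) => (N:ℝ)⁻¹ * (a i * (if t < u 1 then (1:ℝ) else 0)))
    (fun i => by
      apply Measurable.const_mul
      apply Measurable.const_mul
      exact Measurable.ite (measurableSet_lt measurable_const (measurable_pi_apply 1))
        measurable_const measurable_const)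
  exact h

lemma ind_memLp (i : Fin N) (t : ℝ) (a : Fin N → ℝ) :
    MemLp (fun ω => (N:ℝ)⁻¹ * (a i * (if t < R.τ i 1 ω then (1:ℝ) else 0))) 2 (ℙ : Measure Ω) := by
  have hmeas : Measurable (fun ω => (N:ℝ)⁻¹ * (a i * (if t < R.τ i 1 ω then (1:ℝ) else 0))) :=
    ((R.ind_meas i t).const_mul (a i)).const_mul ((N:ℝ)⁻¹)
  have hb : ∀ ω, ‖(N:ℝ)⁻¹ * (a i * (if t < R.τ i 1 ω then (1:ℝ) else 0))‖ ≤ (N:ℝ)⁻¹ * |a i| := by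
    intro ω
    rw [norm_mul, norm_mul]
    rcases le_or_gt t (R.τ i 1 ω) with h | h <;>
      · simp only [Real.norm_eq_abs, abs_inv, Nat.abs_cast]
        by_cases h' : t < R.τ i 1 ω <;>
          simp [h'] <;> positivity
  exact (memLp_top_of_bound hmeas.aestronglyMeasurable _
    (Filter.Eventually.of_forall hb)).mono_exponent le_top

/-- Chebyshev bound for the weighted empirical survival average. -/
lemma lln_bound {t : ℝ} (ht : 0 ≤ t) (a : Fin N → ℝ) (ha : ∀ i, a i ∈ Set.Icc (0:ℝ) 1)
    {δ : ℝ} (hδ : 0 < δ) :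
    (ℙ : Measure Ω) {ω | δ ≤ |(N:ℝ)⁻¹ * ∑ i : Fin N, a i * (if t < R.τ i 1 ω then (1:ℝ) else 0)
        - (N:ℝ)⁻¹ * ∑ i : Fin N, a i * rexp (-(R.w i : ℝ) * t)|}
      ≤ ENNReal.ofReal ((N:ℝ)⁻¹ / δ^2) := by
  classical
  set Z : Fin N → Ω → ℝ :=
    fun i ω => (N:ℝ)⁻¹ * (a i * (if t < R.τ i 1 ω then (1:ℝ) else 0)) with hZ
  set S : Ω → ℝ := ∑ i : Fin N, Z i with hS
  have hmem : ∀ i ∈ Finset.univ, MemLp (Z i) 2 (ℙ : Measure Ω) := fun i _ => R.ind_memLp i t a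
  have hSmem : MemLp S 2 (ℙ : Measure Ω) := memLp_finsetSum' _ hmem
  -- expectation of S
  have hES : ∫ ω, S ω ∂(ℙ : Measure Ω) = (N:ℝ)⁻¹ * ∑ i : Fin N, a i * rexp (-(R.w i : ℝ) * t) := by
    have : ∫ ω, S ω ∂(ℙ : Measure Ω) = ∑ i : Fin N, ∫ ω, Z i ω ∂(ℙ : Measure Ω) := by
      rw [hS]
      rw [← integral_finset_sum]
      · simp
      · exact fun i _ => (R.ind_memLp i t a).integrable one_le_two
    rw [this, Finset.mul_sum]
    congr 1
    ext i
    rw [hZ]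
    simp only
    rw [integral_const_mul, integral_const_mul, R.ind_integral i ht]
  -- variance of S
  have hvar : variance S (ℙ : Measure Ω) ≤ (N:ℝ)⁻¹ := by
    rw [hS, IndepFun.variance_sum hmem
      (fun i _ j _ hij => (R.ind_indep t a).indepFun hij)]
    have hvi : ∀ i : Fin N, variance (Z i) (ℙ : Measure Ω) ≤ ((N:ℝ)⁻¹)^2 := by
      intro i
      have hb : ∀ᵐ ω ∂(ℙ : Measure Ω), Z i ω ∈ Set.Icc (0:ℝ) ((N:ℝ)⁻¹) := by
        apply Filter.Eventually.of_forall
        intro ω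
        rw [hZ]
        simp only
        rcases ha i with ⟨ha0, ha1⟩
        by_cases h' : t < R.τ i 1 ω <;>
          · simp only [h', if_true, if_false, mul_one, mul_zero]
            constructor <;> nlinarith [inv_nonneg.2 (Nat.cast_nonneg (α := ℝ) N)]
      have := variance_le_sq_of_bounded (a := 0) (b := (N:ℝ)⁻¹) hb
        ((R.ind_memLp i t a).aestronglyMeasurable.aemeasurable)
      calc variance (Z i) (ℙ : Measure Ω) ≤ (((N:ℝ)⁻¹ - 0)/2)^2 := this
        _ ≤ ((N:ℝ)⁻¹)^2 := by
          rw [sub_zero]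
          nlinarith [inv_nonneg.2 (Nat.cast_nonneg (α := ℝ) N)]
    calc ∑ i : Fin N, variance (Z i) (ℙ : Measure Ω) ≤ ∑ _i : Fin N, ((N:ℝ)⁻¹)^2 :=
          Finset.sum_le_sum (fun i _ => hvi i)
      _ = N * ((N:ℝ)⁻¹)^2 := by simp [mul_comm]
      _ ≤ (N:ℝ)⁻¹ := by
          rcases Nat.eq_zero_or_pos N with h | h
          · simp [h]
          · have hN : (0:ℝ) < N := by exact_mod_cast h
            rw [sq]
            field_simp
            norm_num
    -- end hvar
  have hcheb := meas_ge_le_variance_div_sq (μ := (ℙ : Measure Ω)) hSmem hδ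
  have hsum : ∀ ω, S ω = (N:ℝ)⁻¹ * ∑ i : Fin N, a i * (if t < R.τ i 1 ω then (1:ℝ) else 0) := by
    intro ω
    rw [hS, hZ]
    simp [Finset.mul_sum]
  have heq : {ω | δ ≤ |(N:ℝ)⁻¹ * ∑ i : Fin N, a i * (if t < R.τ i 1 ω then (1:ℝ) else 0)
        - (N:ℝ)⁻¹ * ∑ i : Fin N, a i * rexp (-(R.w i : ℝ) * t)|}
      = {ω | δ ≤ |S ω - ∫ ω', S ω' ∂(ℙ : Measure Ω)|} := by
    ext ω
    simp only [Set.mem_setOf_eq]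
    rw [← hsum ω, hES]
  rw [heq]
  refine le_trans hcheb (ENNReal.ofReal_le_ofReal ?_)
  apply div_le_div_of_nonneg_right hvar (by positivity)

lemma no_accumulation (i : Fin N) {t : ℝ} (ht : 0 ≤ t) :
    (ℙ : Measure Ω) {ω | (StrictMono fun j => R.τ i j ω) ∧ ∀ j, R.τ i j ω ≤ t} = 0 := by
  set r : ℝ := 1 - rexp (-(R.w i : ℝ) * t) with hr
  have hr0 : 0 ≤ r := by
    have : rexp (-(R.w i : ℝ) * t) ≤ 1 := by
      apply Real.exp_le_one_iff.2
      have : (0:ℝ) ≤ (R.w i : ℝ) * t := mul_nonneg (R.w i).2 ht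
      linarith
    linarith
  have hr1 : r < 1 := by
    have := Real.exp_pos (-(R.w i : ℝ) * t)
    simp only [hr]
    linarith
  have hsub : ∀ m : ℕ, {ω | (StrictMono fun j => R.τ i j ω) ∧ ∀ j, R.τ i j ω ≤ t}
      ⊆ ⋂ k ∈ Finset.range m, (fun ω => R.τ i (k+1) ω - R.τ i k ω) ⁻¹' (Set.Iic t) := by
    intro m ω hω
    simp only [Set.mem_iInter, Set.mem_preimage, Set.mem_Iic]
    intro k _
    rcases hω with ⟨hmono, hle⟩
    have h0 : R.τ i 0 ω = 0 := R.τ_zero i ω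
    have hτk : 0 ≤ R.τ i k ω := by
      have := hmono.monotone (Nat.zero_le k)
      simpa [h0] using this
    have := hle (k+1)
    linarith
  have hmeas : ∀ m : ℕ,
      (ℙ : Measure Ω) (⋂ k ∈ Finset.range m, (fun ω => R.τ i (k+1) ω - R.τ i k ω) ⁻¹' (Set.Iic t))
        = ENNReal.ofReal r ^ m := by
    intro m
    have := (iIndepFun_iff_measure_inter_preimage_eq_mul.1 (R.incr_indep i))
      (Finset.range m) (sets := fun _ => Set.Iic t) (fun k _ => measurableSet_Iic)
    rw [this]
    have : ∀ k : ℕ, (ℙ : Measure Ω) ((fun ω => R.τ i (k+1) ω - R.τ i k ω) ⁻¹' (Set.Iic t))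
        = ENNReal.ofReal r := by
      intro k
      have := R.incr_exp i k t ht
      rw [← this]
      rfl
    simp only [this, Finset.prod_const, Finset.card_range]
  have hbound : ∀ m : ℕ,
      (ℙ : Measure Ω) {ω | (StrictMono fun j => R.τ i j ω) ∧ ∀ j, R.τ i j ω ≤ t}
        ≤ ENNReal.ofReal r ^ m := fun m => (hmeas m) ▸ measure_mono (hsub m)
  have htend : Tendsto (fun m : ℕ => ENNReal.ofReal r ^ m) atTop (𝓝 0) := by
    have : ENNReal.ofReal r < 1 := by
      rw [← ENNReal.ofReal_one]
      exact (ENNReal.ofReal_lt_ofReal_iff one_pos).2 hr1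
    exact ENNReal.tendsto_pow_atTop_nhds_zero_of_lt_one this
  exact le_antisymm (ge_of_tendsto htend (Filter.Eventually.of_forall hbound)) (zero_le)

lemma good_event {t : ℝ} (ht : 0 ≤ t) :
    (ℙ : Measure Ω) {ω | ¬ ((∀ i, StrictMono fun j => R.τ i j ω)
      ∧ ∀ i : Fin N, ∃ j, t < R.τ i j ω)} = 0 := by
  have hsub : {ω | ¬ ((∀ i, StrictMono fun j => R.τ i j ω)
        ∧ ∀ i : Fin N, ∃ j, t < R.τ i j ω)}
      ⊆ {ω | ¬ ∀ i, StrictMono fun j => R.τ i j ω}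
        ∪ ⋃ i : Fin N, {ω | (StrictMono fun j => R.τ i j ω) ∧ ∀ j, R.τ i j ω ≤ t} := by
    intro ω hω
    simp only [Set.mem_setOf_eq, not_and_or] at hω
    by_cases hm : ∀ i, StrictMono fun j => R.τ i j ω
    · rcases hω with h | h
      · exact absurd hm h
      · push_neg at h
        rcases h with ⟨i, hi⟩
        right
        exact Set.mem_iUnion.2 ⟨i, hm i, fun j => hi j⟩
    · left; exact hm
  refine le_antisymm (le_trans (measure_mono hsub) ?_) (zero_le)
  apply le_trans (measure_union_le _ _)
  have h1 : (ℙ : Measure Ω) {ω | ¬ ∀ i, StrictMono fun j => R.τ i j ω} = 0 := R.τ_mono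
  rw [h1, zero_add]
  apply le_trans (measure_iUnion_le _)
  simp [R.no_accumulation (t := t) _ ht]

omit [IsProbabilityMeasure (ℙ : Measure Ω)] in
lemma X_nonjump (ω : Ω) (i : Fin N) {t : ℝ} (ht : 0 ≤ t) (h : t < R.τ i 1 ω) :
    R.X i t ω + (Finset.univ.filter (fun i' => R.x0 i < R.x0 i' ∧ t < R.τ i' 1 ω)).card = N := by
  classical
  rw [R.X_def1 ω i t ht h]
  have hn : Set.ncard {i' : Fin N | R.x0 i < R.x0 i' ∧ R.τ i' 1 ω ≤ t}
      = (Finset.univ.filter (fun i' => R.x0 i < R.x0 i' ∧ R.τ i' 1 ω ≤ t)).card := by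
    rw [Set.ncard_eq_toFinset_card']
    congr 1
    ext i'
    simp
  rw [hn]
  have hsplit : (Finset.univ.filter (fun i' => R.x0 i < R.x0 i' ∧ R.τ i' 1 ω ≤ t)).card
      + (Finset.univ.filter (fun i' => R.x0 i < R.x0 i' ∧ t < R.τ i' 1 ω)).card
      = (Finset.univ.filter (fun i' => R.x0 i < R.x0 i')).card := by
    rw [← Finset.filter_filter, ← Finset.filter_filter]
    have h2 : Finset.filter (fun i' => t < R.τ i' 1 ω)
          (Finset.filter (fun i' => R.x0 i < R.x0 i') Finset.univ)
        = Finset.filter (fun i' => ¬ R.τ i' 1 ω ≤ t)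
          (Finset.filter (fun i' => R.x0 i < R.x0 i') Finset.univ) := by
      apply Finset.filter_congr
      intro i' _
      simp [not_le]
    rw [h2, Finset.card_filter_add_card_filter_not]
  have hc := R.card_gt i
  have hxi := Finset.mem_Icc.1 (R.x0_mem i)
  omega

omit [IsProbabilityMeasure (ℙ : Measure Ω)] in
lemma X_jumped (ω : Ω) (i : Fin N) {t : ℝ} (ht : 0 ≤ t)
    (hmono : ∀ i', StrictMono fun j => R.τ i' j ω)
    (hesc : ∃ j, t < R.τ i j ω) (h : R.τ i 1 ω ≤ t) :
    R.X i t ω ≤ (Finset.univ.filter (fun i' => R.τ i' 1 ω ≤ t)).card := by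
  classical
  obtain ⟨j0, hj0⟩ := hesc
  have hicard : 1 ≤ (Finset.univ.filter (fun i' => R.τ i' 1 ω ≤ t)).card :=
    Finset.card_pos.2 ⟨i, Finset.mem_filter.2 ⟨Finset.mem_univ i, h⟩⟩
  set P : ℕ → Prop := fun j => R.τ i j ω ≤ t with hP
  have hP1 : P 1 := h
  have h1j0 : 1 ≤ j0 := by
    by_contra hc
    push_neg at hc
    interval_cases j0
    · rw [R.τ_zero] at hj0; linarith
  set m := Nat.findGreatest P j0 with hm
  have hPm : P m := Nat.findGreatest_spec h1j0 hP1
  have h1m : 1 ≤ m := Nat.le_findGreatest h1j0 hP1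
  have hnext : t < R.τ i (m+1) ω := by
    by_cases hle : m + 1 ≤ j0
    · by_contra hc
      push_neg at hc
      exact Nat.findGreatest_is_greatest (Nat.lt_succ_self m) hle hc
    · push_neg at hle
      have : j0 ≤ m + 1 := by omega
      calc t < R.τ i j0 ω := hj0
        _ ≤ R.τ i (m+1) ω := (hmono i).monotone this
  rcases eq_or_lt_of_le (hPm : R.τ i m ω ≤ t) with heq | hlt
  · have : R.X i t ω = 1 := by
      rw [← heq]
      exact R.X_def2 ω i m h1m
    omega
  · rw [R.X_def3 ω i m t h1m hlt hnext]
    have hsub : {i' : Fin N | ∃ j' : ℕ, 1 ≤ j' ∧ R.τ i m ω < R.τ i' j' ω ∧ R.τ i' j' ω ≤ t}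
        ⊆ ↑(Finset.univ.filter (fun i' => R.τ i' 1 ω ≤ t)) := by
      intro i' hi'
      rcases hi' with ⟨j', hj'1, _, hj'le⟩
      simp only [Finset.coe_filter, Set.mem_setOf_eq, Finset.mem_univ, true_and]
      calc R.τ i' 1 ω ≤ R.τ i' j' ω := (hmono i').monotone hj'1
        _ ≤ t := hj'le
    calc Set.ncard {i' : Fin N | ∃ j' : ℕ, 1 ≤ j' ∧ R.τ i m ω < R.τ i' j' ω ∧ R.τ i' j' ω ≤ t}
        ≤ Set.ncard (↑(Finset.univ.filter (fun i' => R.τ i' 1 ω ≤ t)) : Set (Fin N)) :=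
          Set.ncard_le_ncard hsub (Set.toFinite _)
      _ = (Finset.univ.filter (fun i' => R.τ i' 1 ω ≤ t)).card := Set.ncard_coe_finset _

omit [IsProbabilityMeasure (ℙ : Measure Ω)] in
lemma yCN_eq (ω : Ω) (t : ℝ) :
    R.yCN t ω = (N:ℝ)⁻¹ * (Finset.univ.filter (fun i' => R.τ i' 1 ω ≤ t)).card := by
  rw [yCN]
  congr 1
  rw [Finset.sum_boole]

end RankingSystem

/-- LLN in probability for weighted survival averages along a family of ranking systems. -/
lemma lln_prob {Ω : Type} [MeasureSpace Ω] [IsProbabilityMeasure (ℙ : Measure Ω)]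
    (R : (N : ℕ) → RankingSystem Ω N) {t : ℝ} (ht : 0 ≤ t)
    (a : ∀ N : ℕ, Fin N → ℝ) (ha : ∀ N i, a N i ∈ Set.Icc (0:ℝ) 1) (l : ℝ)
    (hmean : Tendsto (fun N : ℕ =>
      (N:ℝ)⁻¹ * ∑ i : Fin N, a N i * rexp (-((R N).w i : ℝ) * t)) atTop (𝓝 l))
    {δ : ℝ} (hδ : 0 < δ) :
    Tendsto (fun N : ℕ => (ℙ : Measure Ω)
      {ω | δ ≤ |(N:ℝ)⁻¹ * ∑ i : Fin N, a N i * (if t < (R N).τ i 1 ω then (1:ℝ) else 0) - l|})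
      atTop (𝓝 0) := by
  have hδ2 : 0 < δ/2 := by linarith
  have hb : Tendsto (fun N : ℕ => ENNReal.ofReal ((N:ℝ)⁻¹ / (δ/2)^2)) atTop (𝓝 0) := by
    rw [show (0 : ENNReal) = ENNReal.ofReal 0 by simp]
    apply ENNReal.tendsto_ofReal
    have : Tendsto (fun N : ℕ => (N:ℝ)⁻¹) atTop (𝓝 0) := tendsto_inv_atTop_zero.comp
      tendsto_natCast_atTop_atTop
    have := this.div_const ((δ/2)^2)
    simpa using this
  apply tendsto_of_tendsto_of_tendsto_of_le_of_le' tendsto_const_nhds hb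
  · exact Filter.Eventually.of_forall (fun N => zero_le)
  · have hev : ∀ᶠ N : ℕ in atTop,
        |(N:ℝ)⁻¹ * ∑ i : Fin N, a N i * rexp (-((R N).w i : ℝ) * t) - l| < δ/2 := by
      have := hmean.eventually (eventually_abs_sub_lt l hδ2)
      simpa using this
    filter_upwards [hev] with N hN
    have hsub : {ω | δ ≤ |(N:ℝ)⁻¹ * ∑ i : Fin N, a N i
          * (if t < (R N).τ i 1 ω then (1:ℝ) else 0) - l|}
        ⊆ {ω | δ/2 ≤ |(N:ℝ)⁻¹ * ∑ i : Fin N, a N i * (if t < (R N).τ i 1 ω then (1:ℝ) else 0)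
          - (N:ℝ)⁻¹ * ∑ i : Fin N, a N i * rexp (-((R N).w i : ℝ) * t)|} := by
      intro ω hω
      simp only [Set.mem_setOf_eq] at hω ⊢
      have h1 := abs_sub_abs_le_abs_sub
        ((N:ℝ)⁻¹ * ∑ i : Fin N, a N i * (if t < (R N).τ i 1 ω then (1:ℝ) else 0) - l)
        ((N:ℝ)⁻¹ * ∑ i : Fin N, a N i * rexp (-((R N).w i : ℝ) * t) - l)
      have h2 : |((N:ℝ)⁻¹ * ∑ i : Fin N, a N i * (if t < (R N).τ i 1 ω then (1:ℝ) else 0) - l)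
          - ((N:ℝ)⁻¹ * ∑ i : Fin N, a N i * rexp (-((R N).w i : ℝ) * t) - l)|
          = |(N:ℝ)⁻¹ * ∑ i : Fin N, a N i * (if t < (R N).τ i 1 ω then (1:ℝ) else 0)
          - (N:ℝ)⁻¹ * ∑ i : Fin N, a N i * rexp (-((R N).w i : ℝ) * t)| := by
        congr 1
        ring
      rw [h2] at h1
      linarith
    exact le_trans (measure_mono hsub) ((R N).lln_bound ht (a N) (ha N) hδ2)

section Det

/-- `x ↦ exp (-x t)` as a bounded continuous function on `ℝ≥0`, for `t ≥ 0`. -/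
def expBCF (t : ℝ) (ht : 0 ≤ t) : ℝ≥0 →ᵇ ℝ :=
  BoundedContinuousFunction.ofNormedAddCommGroup (fun x : ℝ≥0 => rexp (-(x:ℝ) * t))
    (by continuity) 1
    (fun x => by
      rw [Real.norm_eq_abs, abs_of_pos (Real.exp_pos _)]
      apply Real.exp_le_one_iff.2
      have : (0:ℝ) ≤ (x:ℝ) * t := mul_nonneg x.2 ht
      linarith)

lemma expBCF_apply (t : ℝ) (ht : 0 ≤ t) (x : ℝ≥0) : expBCF t ht x = rexp (-(x:ℝ) * t) := rfl

variable (μ0 : ℝ → Measure ℝ≥0) (t : ℝ)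
variable (hμ0 : ∀ z, IsProbabilityMeasure (μ0 z)) (ht : 0 ≤ t)
include hμ0 ht

lemma exp_integrable (z : ℝ) : Integrable (fun x : ℝ≥0 => rexp (-(x:ℝ) * t)) (μ0 z) := by
  have := hμ0 z
  apply Integrable.mono' (integrable_const (1:ℝ))
    (Continuous.aestronglyMeasurable (by continuity))
  apply Filter.Eventually.of_forall
  intro x
  rw [Real.norm_eq_abs, abs_of_pos (Real.exp_pos _)]
  apply Real.exp_le_one_iff.2
  have : (0:ℝ) ≤ (x:ℝ) * t := mul_nonneg x.2 ht
  linarith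

lemma inner_pos (z : ℝ) : 0 < ∫ x, rexp (-(x:ℝ) * t) ∂(μ0 z) := by
  have := hμ0 z
  rw [integral_pos_iff_support_of_nonneg_ae
    (Filter.Eventually.of_forall (fun x => (Real.exp_pos _).le))
    (exp_integrable μ0 t hμ0 ht z)]
  have : Function.support (fun x : ℝ≥0 => rexp (-(x:ℝ) * t)) = Set.univ := by
    ext x; simp [Function.mem_support, (Real.exp_pos _).ne']
  rw [this]
  simp

lemma inner_le_one (z : ℝ) : ∫ x, rexp (-(x:ℝ) * t) ∂(μ0 z) ≤ 1 := by
  have := hμ0 z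
  calc ∫ x, rexp (-(x:ℝ) * t) ∂(μ0 z) ≤ ∫ _, (1:ℝ) ∂(μ0 z) := by
        apply integral_mono (exp_integrable μ0 t hμ0 ht z) (integrable_const 1)
        intro x
        apply Real.exp_le_one_iff.2
        have : (0:ℝ) ≤ (x:ℝ) * t := mul_nonneg x.2 ht
        linarith
    _ = 1 := by simp

lemma inner_intervalIntegrable
    (hm : AEMeasurable (fun z => ∫ x, rexp (-(x:ℝ) * t) ∂(μ0 z)) volume) (a b : ℝ) :
    IntervalIntegrable (fun z => ∫ x, rexp (-(x:ℝ) * t) ∂(μ0 z)) volume a b := by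
  rw [intervalIntegrable_iff]
  haveI : IsFiniteMeasure (volume.restrict (Set.uIoc a b)) :=
    ⟨by rw [Measure.restrict_apply_univ]; exact measure_Ioc_lt_top⟩
  apply Integrable.mono' (integrable_const (1:ℝ)) (hm.restrict.aestronglyMeasurable)
  apply Filter.Eventually.of_forall
  intro z
  rw [Real.norm_eq_abs, abs_of_pos (inner_pos μ0 t hμ0 ht z)]
  exact inner_le_one μ0 t hμ0 ht z

lemma inner_interval_pos
    (hm : AEMeasurable (fun z => ∫ x, rexp (-(x:ℝ) * t) ∂(μ0 z)) volume)
    {a b : ℝ} (hab : a < b) :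
    0 < ∫ z in a..b, ∫ x, rexp (-(x:ℝ) * t) ∂(μ0 z) := by
  rw [intervalIntegral.integral_pos_iff_support_of_nonneg_ae
    (Filter.Eventually.of_forall (fun z => (inner_pos μ0 t hμ0 ht z).le))
    (inner_intervalIntegrable μ0 t hμ0 ht hm a b)]
  refine ⟨hab, ?_⟩
  have hsupp : Function.support (fun z => ∫ x, rexp (-(x:ℝ) * t) ∂(μ0 z)) = Set.univ := by
    ext z
    simp only [Function.mem_support, Set.mem_univ, iff_true]
    exact (inner_pos μ0 t hμ0 ht z).ne'
  rw [hsupp, Set.univ_inter, Real.volume_Ioc]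
  simp [hab]

end Det

section Mean

variable {Ω : Type} [MeasureSpace Ω] (R : (N : ℕ) → RankingSystem Ω N)
  (μ0 : ℝ → Measure ℝ≥0) (hμ0 : ∀ z, IsProbabilityMeasure (μ0 z))
  (g : ℝ≥0 →ᵇ ℝ)
  (hinit : Tendsto (fun N : ℕ => ⨆ y : Set.Ico (0 : ℝ) 1,
        |(N : ℝ)⁻¹ * (∑ i : Fin N, g ((R N).w i)
            * (if (R N).y0 i ≤ (y : ℝ) then (1 : ℝ) else 0))
          - ∫ z in (0 : ℝ)..(y : ℝ), ∫ x, g x ∂(μ0 z)|) atTop (𝓝 0))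

include hμ0 hinit in
lemma mean_bddAbove (N : ℕ) : BddAbove (Set.range (fun y : Set.Ico (0 : ℝ) 1 =>
    |(N : ℝ)⁻¹ * (∑ i : Fin N, g ((R N).w i)
        * (if (R N).y0 i ≤ (y : ℝ) then (1 : ℝ) else 0))
      - ∫ z in (0 : ℝ)..(y : ℝ), ∫ x, g x ∂(μ0 z)|)) := by
  refine ⟨‖g‖ + ‖g‖, ?_⟩
  rintro v ⟨⟨y, hy0, hy1⟩, rfl⟩
  simp only
  apply le_trans (abs_sub _ _)
  gcongr
  · -- |N⁻¹ * Σ| ≤ ‖g‖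
    rw [abs_mul]
    rcases Nat.eq_zero_or_pos N with h | h
    · subst h; simp [norm_nonneg]
    have hN : (0:ℝ) < N := by exact_mod_cast h
    calc |(N:ℝ)⁻¹| * |∑ i : Fin N, g ((R N).w i) * (if (R N).y0 i ≤ y then (1:ℝ) else 0)|
        ≤ (N:ℝ)⁻¹ * ∑ i : Fin N, ‖g‖ := by
          rw [abs_of_pos (by positivity : (0:ℝ) < (N:ℝ)⁻¹)]
          gcongr
          apply le_trans (Finset.abs_sum_le_sum_abs _ _)
          apply Finset.sum_le_sum
          intro i _
          rw [abs_mul]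
          calc |g ((R N).w i)| * |if (R N).y0 i ≤ y then (1:ℝ) else 0|
              ≤ ‖g‖ * 1 := by
                apply mul_le_mul
                · exact (g.norm_coe_le_norm _)
                · split <;> simp
                · positivity
                · exact norm_nonneg _
            _ = ‖g‖ := mul_one _
      _ = ‖g‖ := by
          rw [Finset.sum_const, Finset.card_univ, Fintype.card_fin, nsmul_eq_mul]
          field_simp
  · -- |∫_0^y| ≤ ‖g‖
    have := hμ0
    have hb : ∀ z ∈ Set.uIoc (0:ℝ) y, ‖∫ x, g x ∂(μ0 z)‖ ≤ ‖g‖ := by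
      intro z _
      have := hμ0 z
      exact g.norm_integral_le_norm (μ0 z)
    calc |∫ z in (0:ℝ)..y, ∫ x, g x ∂(μ0 z)| = ‖∫ z in (0:ℝ)..y, ∫ x, g x ∂(μ0 z)‖ := rfl
      _ ≤ ‖g‖ * |y - 0| := intervalIntegral.norm_integral_le_of_norm_le_const hb
      _ ≤ ‖g‖ * 1 := by
          gcongr
          rw [sub_zero, abs_of_nonneg hy0]
          linarith
      _ = ‖g‖ := mul_one _

include hμ0 hinit in
lemma mean_conv_at {z : ℝ} (hz : z ∈ Set.Ico (0:ℝ) 1) :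
    Tendsto (fun N : ℕ => (N : ℝ)⁻¹ * (∑ i : Fin N, g ((R N).w i)
        * (if (R N).y0 i ≤ z then (1 : ℝ) else 0)))
      atTop (𝓝 (∫ u in (0 : ℝ)..z, ∫ x, g x ∂(μ0 u))) := by
  rw [tendsto_iff_norm_sub_tendsto_zero]
  apply squeeze_zero (fun N => norm_nonneg _)
    (g := fun N : ℕ => ⨆ y : Set.Ico (0 : ℝ) 1,
      |(N : ℝ)⁻¹ * (∑ i : Fin N, g ((R N).w i)
          * (if (R N).y0 i ≤ (y : ℝ) then (1 : ℝ) else 0))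
        - ∫ u in (0 : ℝ)..(y : ℝ), ∫ x, g x ∂(μ0 u)|)
  · intro N
    exact le_ciSup (mean_bddAbove R μ0 hμ0 g hinit N) (⟨z, hz⟩ : Set.Ico (0:ℝ) 1)
  · exact hinit

include hμ0 in
lemma innerg_intervalIntegrable (hgm : AEMeasurable (fun z => ∫ x, g x ∂(μ0 z)) volume)
    (a b : ℝ) : IntervalIntegrable (fun z => ∫ x, g x ∂(μ0 z)) volume a b := by
  rw [intervalIntegrable_iff]
  haveI : IsFiniteMeasure (volume.restrict (Set.uIoc a b)) :=
    ⟨by rw [Measure.restrict_apply_univ]; exact measure_Ioc_lt_top⟩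
  apply Integrable.mono' (integrable_const ‖g‖) (hgm.restrict.aestronglyMeasurable)
  apply Filter.Eventually.of_forall
  intro z
  have := hμ0 z
  exact g.norm_integral_le_norm (μ0 z)

include hμ0 hinit in
lemma mean_conv_full (hgm : AEMeasurable (fun z => ∫ x, g x ∂(μ0 z)) volume) :
    Tendsto (fun N : ℕ => (N : ℝ)⁻¹ * (∑ i : Fin N, g ((R N).w i)))
      atTop (𝓝 (∫ u in (0 : ℝ)..1, ∫ x, g x ∂(μ0 u))) := by
  rw [tendsto_iff_norm_sub_tendsto_zero]
  apply squeeze_zero' (Filter.Eventually.of_forall (fun N => norm_nonneg _))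
    (g := fun N : ℕ => (⨆ y : Set.Ico (0 : ℝ) 1,
      |(N : ℝ)⁻¹ * (∑ i : Fin N, g ((R N).w i)
          * (if (R N).y0 i ≤ (y : ℝ) then (1 : ℝ) else 0))
        - ∫ u in (0 : ℝ)..(y : ℝ), ∫ x, g x ∂(μ0 u)|) + ‖g‖ * (N:ℝ)⁻¹)
  · filter_upwards [Filter.eventually_ge_atTop 1] with N hN
    have hN0 : (0:ℝ) < N := by exact_mod_cast hN
    set zN : ℝ := 1 - (N:ℝ)⁻¹ with hzN
    have hinv0 : (0:ℝ) < (N:ℝ)⁻¹ := by positivity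
    have hinv1 : (N:ℝ)⁻¹ ≤ 1 := by
      rw [inv_le_one_iff₀]
      right
      exact_mod_cast hN
    have hzN0 : zN ∈ Set.Ico (0:ℝ) 1 := by
      rw [Set.mem_Ico, hzN]
      constructor <;> linarith
    have hχ : ∀ i : Fin N, (if (R N).y0 i ≤ zN then (1:ℝ) else 0) = 1 := by
      intro i
      rw [if_pos]
      rw [RankingSystem.y0, hzN]
      rw [div_le_iff₀ hN0]
      have hx := Finset.mem_Icc.1 ((R N).x0_mem i)
      have hxN : ((R N).x0 i : ℝ) ≤ N := by exact_mod_cast hx.2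
      field_simp
      linarith
    have hsplit : ∫ u in (0:ℝ)..1, ∫ x, g x ∂(μ0 u)
        = (∫ u in (0:ℝ)..zN, ∫ x, g x ∂(μ0 u)) + ∫ u in zN..1, ∫ x, g x ∂(μ0 u) :=
      (intervalIntegral.integral_add_adjacent_intervals
        (innerg_intervalIntegrable μ0 hμ0 g hgm 0 zN)
        (innerg_intervalIntegrable μ0 hμ0 g hgm zN 1)).symm
    have htail : |∫ u in zN..1, ∫ x, g x ∂(μ0 u)| ≤ ‖g‖ * (N:ℝ)⁻¹ := by
      have hb : ∀ z ∈ Set.uIoc zN 1, ‖∫ x, g x ∂(μ0 z)‖ ≤ ‖g‖ := by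
        intro z _
        have := hμ0 z
        exact g.norm_integral_le_norm (μ0 z)
      calc |∫ u in zN..1, ∫ x, g x ∂(μ0 u)|
          ≤ ‖g‖ * |1 - zN| := intervalIntegral.norm_integral_le_of_norm_le_const hb
        _ = ‖g‖ * (N:ℝ)⁻¹ := by
            congr 1
            rw [hzN, show (1:ℝ) - (1 - (N:ℝ)⁻¹) = (N:ℝ)⁻¹ by ring]
            exact abs_of_nonneg hinv0.le
    have hAχ : (∑ i : Fin N, g ((R N).w i)) = ∑ i : Fin N, g ((R N).w i)
        * (if (R N).y0 i ≤ zN then (1:ℝ) else 0) := by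
      apply Finset.sum_congr rfl
      intro i _
      rw [hχ i, mul_one]
    calc ‖(N:ℝ)⁻¹ * (∑ i : Fin N, g ((R N).w i)) - ∫ u in (0:ℝ)..1, ∫ x, g x ∂(μ0 u)‖
        = |((N:ℝ)⁻¹ * (∑ i : Fin N, g ((R N).w i)
            * (if (R N).y0 i ≤ zN then (1:ℝ) else 0))
            - ∫ u in (0:ℝ)..zN, ∫ x, g x ∂(μ0 u)) - ∫ u in zN..1, ∫ x, g x ∂(μ0 u)| := by
          rw [hsplit, Real.norm_eq_abs, ← hAχ]
          congr 1
          ring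
      _ ≤ |(N:ℝ)⁻¹ * (∑ i : Fin N, g ((R N).w i)
            * (if (R N).y0 i ≤ zN then (1:ℝ) else 0))
            - ∫ u in (0:ℝ)..zN, ∫ x, g x ∂(μ0 u)| + |∫ u in zN..1, ∫ x, g x ∂(μ0 u)| :=
          abs_sub _ _
      _ ≤ (⨆ y : Set.Ico (0 : ℝ) 1,
          |(N : ℝ)⁻¹ * (∑ i : Fin N, g ((R N).w i)
              * (if (R N).y0 i ≤ (y : ℝ) then (1 : ℝ) else 0))
            - ∫ u in (0 : ℝ)..(y : ℝ), ∫ x, g x ∂(μ0 u)|) + ‖g‖ * (N:ℝ)⁻¹ := by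
          gcongr
          · exact le_ciSup (mean_bddAbove R μ0 hμ0 g hinit N) (⟨zN, hzN0⟩ : Set.Ico (0:ℝ) 1)
  · have h2 : Tendsto (fun N : ℕ => ‖g‖ * (N:ℝ)⁻¹) atTop (𝓝 0) := by
      have : Tendsto (fun N : ℕ => (N:ℝ)⁻¹) atTop (𝓝 0) := tendsto_inv_atTop_zero.comp
        tendsto_natCast_atTop_atTop
      simpa using this.const_mul ‖g‖
    simpa using hinit.add h2

end Mean

namespace RankingSystem

variable {Ω : Type} [MeasureSpace Ω] {N : ℕ} (R : RankingSystem Ω N)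

omit [MeasureSpace Ω] in
lemma y0_nonneg' : True := trivial

lemma y0_nonneg (i : Fin N) : 0 ≤ R.y0 i := by
  have hx := Finset.mem_Icc.1 (R.x0_mem i)
  have h1 : (1:ℝ) ≤ ((R.x0 i : ℕ) : ℝ) := by exact_mod_cast hx.1
  rw [y0]
  apply div_nonneg (by linarith) (Nat.cast_nonneg N)

lemma y0_lt_one (i : Fin N) : R.y0 i < 1 := by
  have hx := Finset.mem_Icc.1 (R.x0_mem i)
  have hN : 0 < N := lt_of_lt_of_le hx.1 hx.2
  have hN0 : (0:ℝ) < N := by exact_mod_cast hN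
  have h2 : ((R.x0 i : ℕ) : ℝ) ≤ N := by exact_mod_cast hx.2
  rw [y0, div_lt_one hN0]
  linarith

omit [MeasureSpace Ω] in
lemma y0_strictmono : True := trivial

lemma x0_lt_of_y0_lt {i i' : Fin N} (h : R.y0 i < R.y0 i') : R.x0 i < R.x0 i' := by
  have hx := Finset.mem_Icc.1 (R.x0_mem i)
  have hN : 0 < N := lt_of_lt_of_le hx.1 hx.2
  have hN0 : (0:ℝ) < N := by exact_mod_cast hN
  rw [y0, y0, div_lt_div_iff_of_pos_right hN0] at h
  have : ((R.x0 i : ℕ) : ℝ) < ((R.x0 i' : ℕ) : ℝ) := by linarith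
  exact_mod_cast this

/-- The real-valued count of later-ranked never-jumped particles. -/
def cntR (ω : Ω) (t : ℝ) (i : Fin N) : ℝ :=
  ∑ i' : Fin N, (if R.x0 i < R.x0 i' ∧ t < R.τ i' 1 ω then (1:ℝ) else 0)

/-- Value of `Y` for a particle that has not jumped yet. -/
lemma Y_nonjump_val (ω : Ω) (i : Fin N) {t : ℝ} (ht : 0 ≤ t) (h : t < R.τ i 1 ω) :
    R.Y i t ω = ((N:ℝ) - R.cntR ω t i - 1) / N := by
  have hX := R.X_nonjump ω i ht h
  have hcnt : R.cntR ω t i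
      = ((Finset.univ.filter (fun i' => R.x0 i < R.x0 i' ∧ t < R.τ i' 1 ω)).card : ℝ) := by
    rw [cntR, Finset.sum_boole]
  rw [Y, hcnt]
  congr 1
  have : ((R.X i t ω : ℕ) : ℝ)
      + ((Finset.univ.filter (fun i' => R.x0 i < R.x0 i' ∧ t < R.τ i' 1 ω)).card : ℝ)
      = (N : ℝ) := by exact_mod_cast congrArg (Nat.cast : ℕ → ℝ) hX
  linarith

/-- A jumped particle has `Y ≤ y_C^{(N)} - 1/N`. -/
lemma Y_jumped_le (ω : Ω) (i : Fin N) {t : ℝ} (ht : 0 ≤ t)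
    (hmono : ∀ i', StrictMono fun j => R.τ i' j ω)
    (hesc : ∃ j, t < R.τ i j ω) (h : R.τ i 1 ω ≤ t) :
    R.Y i t ω ≤ R.yCN t ω - (N:ℝ)⁻¹ := by
  have hX := R.X_jumped ω i ht hmono hesc h
  have hN : 0 < N := Fin.pos i
  have hN0 : (0:ℝ) < N := by exact_mod_cast hN
  have hXr : ((R.X i t ω : ℕ) : ℝ)
      ≤ ((Finset.univ.filter (fun i' => R.τ i' 1 ω ≤ t)).card : ℝ) := by exact_mod_cast hX
  rw [Y, R.yCN_eq ω t]
  rw [div_le_iff₀ hN0]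
  have hinv : (N:ℝ)⁻¹ * (N:ℝ) = 1 := by field_simp
  ring_nf
  nlinarith [hXr]

end RankingSystem

namespace RankingSystem

variable {Ω : Type} [MeasureSpace Ω] {N : ℕ} (R : RankingSystem Ω N)

lemma exists_top (ω : Ω) {t y : ℝ} (ht : 0 ≤ t) (hy1 : y < 1) (hN : 0 < N)
    (hyCN : R.yCN t ω < y) (hNy : (N:ℝ)⁻¹ < 1 - y) :
    ∃ i : Fin N, t < R.τ i 1 ω ∧ y < R.Y i t ω := by
  classical
  have hN0 : (0:ℝ) < N := by exact_mod_cast hN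
  set NJ := Finset.univ.filter (fun i : Fin N => t < R.τ i 1 ω) with hNJ
  have hJcard : ((Finset.univ.filter (fun i' : Fin N => R.τ i' 1 ω ≤ t)).card : ℝ) < N := by
    have := R.yCN_eq ω t
    rw [this] at hyCN
    by_contra hc
    push_neg at hc
    have : (1:ℝ) ≤ (N:ℝ)⁻¹ * ((Finset.univ.filter (fun i' : Fin N => R.τ i' 1 ω ≤ t)).card : ℝ) := by
      rw [inv_mul_eq_div, le_div_iff₀ hN0]
      linarith
    linarith
  have hNJne : NJ.Nonempty := by
    rw [← Finset.card_pos]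
    have hsplit := Finset.card_filter_add_card_filter_not
      (s := (Finset.univ : Finset (Fin N))) (p := fun i : Fin N => R.τ i 1 ω ≤ t)
    have hNJcard : NJ.card = (Finset.univ.filter (fun i : Fin N => ¬ R.τ i 1 ω ≤ t)).card := by
      congr 1
      apply Finset.filter_congr
      intro i _
      simp [not_le]
    have hcard : (Finset.univ.filter (fun i' : Fin N => R.τ i' 1 ω ≤ t)).card < N := by
      exact_mod_cast hJcard
    rw [Finset.card_univ, Fintype.card_fin] at hsplit
    omega
  obtain ⟨im, him, hmax⟩ := NJ.exists_max_image (fun i => R.x0 i) hNJne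
  have himNJ : t < R.τ im 1 ω := (Finset.mem_filter.1 him).2
  refine ⟨im, himNJ, ?_⟩
  have hcnt : R.cntR ω t im = 0 := by
    rw [cntR]
    apply Finset.sum_eq_zero
    intro i' _
    rw [if_neg]
    rintro ⟨hlt, hτ⟩
    have : i' ∈ NJ := Finset.mem_filter.2 ⟨Finset.mem_univ _, hτ⟩
    exact absurd (hmax i' this) (not_le.2 hlt)
  rw [R.Y_nonjump_val ω im ht himNJ, hcnt]
  rw [lt_div_iff₀ hN0]
  have : (N:ℝ)⁻¹ * N = 1 := by field_simp
  nlinarith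

lemma not_mem_low (ω : Ω) {t y : ℝ} (ht : 0 ≤ t) (hmono : ∀ i', StrictMono fun j => R.τ i' j ω)
    (hesc : ∀ i', ∃ j, t < R.τ i' j ω) (hyCN : R.yCN t ω < y) (z1 : ℝ)
    (hT : 1 - y < (N:ℝ)⁻¹ * ∑ i' : Fin N, (1:ℝ) * (if t < R.τ i' 1 ω then (1:ℝ) else 0)
      - (N:ℝ)⁻¹ * ∑ i' : Fin N,
        (if R.y0 i' ≤ z1 then (1:ℝ) else 0) * (if t < R.τ i' 1 ω then (1:ℝ) else 0)) :
    ∀ i : Fin N, R.y0 i ≤ z1 → ¬ (y < R.Y i t ω) := by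
  intro i hi hY
  have hN : 0 < N := Fin.pos i
  have hN0 : (0:ℝ) < N := by exact_mod_cast hN
  rcases le_or_gt (R.τ i 1 ω) t with hj | hnj
  · have := R.Y_jumped_le ω i ht hmono (hesc i) hj
    have hNinv : (0:ℝ) < (N:ℝ)⁻¹ := by positivity
    linarith
  · -- non-jumped case
    have hYval := R.Y_nonjump_val ω i ht hnj
    have hcnt_ge : (N:ℝ)⁻¹ * ∑ i' : Fin N, (1:ℝ) * (if t < R.τ i' 1 ω then (1:ℝ) else 0)
        - (N:ℝ)⁻¹ * ∑ i' : Fin N,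
          (if R.y0 i' ≤ z1 then (1:ℝ) else 0) * (if t < R.τ i' 1 ω then (1:ℝ) else 0)
        ≤ (N:ℝ)⁻¹ * R.cntR ω t i := by
      rw [← mul_sub, ← Finset.sum_sub_distrib, cntR]
      apply mul_le_mul_of_nonneg_left _ (by positivity)
      apply Finset.sum_le_sum
      intro i' _
      by_cases hτ : t < R.τ i' 1 ω
      · by_cases hz : R.y0 i' ≤ z1
        · simp only [hτ, hz, if_true, mul_one, one_mul]
          split <;> norm_num
        · have hx : R.x0 i < R.x0 i' := R.x0_lt_of_y0_lt (lt_of_le_of_lt hi (not_le.1 hz))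
          simp [hτ, hz, hx]
      · simp only [hτ, if_false, mul_zero, sub_zero]
        split <;> norm_num
    rw [hYval, lt_div_iff₀ hN0] at hY
    have hfin : (N:ℝ)⁻¹ * R.cntR ω t i < 1 - y - (N:ℝ)⁻¹ := by
      rw [inv_mul_eq_div, div_lt_iff₀ hN0]
      have : (N:ℝ)⁻¹ * N = 1 := by field_simp
      nlinarith
    have hinv : (0:ℝ) < (N:ℝ)⁻¹ := by positivity
    linarith

lemma exists_high (ω : Ω) {t y : ℝ} (ht : 0 ≤ t) (z2 : ℝ)
    (hS : 0 < (N:ℝ)⁻¹ * ∑ i' : Fin N,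
        (if R.y0 i' ≤ z2 then (1:ℝ) else 0) * (if t < R.τ i' 1 ω then (1:ℝ) else 0))
    (hT : (N:ℝ)⁻¹ * ∑ i' : Fin N, (1:ℝ) * (if t < R.τ i' 1 ω then (1:ℝ) else 0)
      - (N:ℝ)⁻¹ * ∑ i' : Fin N,
        (if R.y0 i' ≤ z2 then (1:ℝ) else 0) * (if t < R.τ i' 1 ω then (1:ℝ) else 0)
      < 1 - y - (N:ℝ)⁻¹) :
    ∃ i : Fin N, R.y0 i ≤ z2 ∧ y < R.Y i t ω := by
  classical
  set F := Finset.univ.filter (fun i : Fin N => R.y0 i ≤ z2 ∧ t < R.τ i 1 ω) with hF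
  have hFne : F.Nonempty := by
    rw [Finset.nonempty_iff_ne_empty]
    intro hFe
    have : ∑ i' : Fin N, (if R.y0 i' ≤ z2 then (1:ℝ) else 0)
        * (if t < R.τ i' 1 ω then (1:ℝ) else 0) = 0 := by
      apply Finset.sum_eq_zero
      intro i' _
      by_cases h1 : R.y0 i' ≤ z2
      · by_cases h2 : t < R.τ i' 1 ω
        · exfalso
          have : i' ∈ F := Finset.mem_filter.2 ⟨Finset.mem_univ _, h1, h2⟩
          rw [hFe] at this
          exact absurd this (Finset.notMem_empty i')
        · simp [h2]
      · simp [h1]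
    rw [this, mul_zero] at hS
    exact lt_irrefl _ hS
  obtain ⟨im, him, hmax⟩ := F.exists_max_image (fun i => R.x0 i) hFne
  obtain ⟨himz, himτ⟩ := (Finset.mem_filter.1 him).2
  have hN : 0 < N := Fin.pos im
  have hN0 : (0:ℝ) < N := by exact_mod_cast hN
  refine ⟨im, himz, ?_⟩
  have hcnt_le : (N:ℝ)⁻¹ * R.cntR ω t im
      ≤ (N:ℝ)⁻¹ * ∑ i' : Fin N, (1:ℝ) * (if t < R.τ i' 1 ω then (1:ℝ) else 0)
      - (N:ℝ)⁻¹ * ∑ i' : Fin N,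
        (if R.y0 i' ≤ z2 then (1:ℝ) else 0) * (if t < R.τ i' 1 ω then (1:ℝ) else 0) := by
    rw [← mul_sub, ← Finset.sum_sub_distrib, cntR]
    apply mul_le_mul_of_nonneg_left _ (by positivity)
    apply Finset.sum_le_sum
    intro i' _
    by_cases hc : R.x0 im < R.x0 i' ∧ t < R.τ i' 1 ω
    · rw [if_pos hc]
      obtain ⟨hx, hτ⟩ := hc
      have hz : ¬ R.y0 i' ≤ z2 := by
        intro hz
        have : i' ∈ F := Finset.mem_filter.2 ⟨Finset.mem_univ _, hz, hτ⟩
        exact absurd (hmax i' this) (not_le.2 hx)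
      simp [hτ, hz]
    · rw [if_neg hc]
      by_cases hτ : t < R.τ i' 1 ω
      · by_cases hz : R.y0 i' ≤ z2 <;> simp [hτ, hz]
      · simp [hτ]
  have hYval := R.Y_nonjump_val ω im ht himτ
  rw [hYval, lt_div_iff₀ hN0]
  have hfin : (N:ℝ)⁻¹ * R.cntR ω t im < 1 - y - (N:ℝ)⁻¹ := lt_of_le_of_lt hcnt_le hT
  rw [inv_mul_eq_div, div_lt_iff₀ hN0] at hfin
  have : (N:ℝ)⁻¹ * N = 1 := by field_simp
  nlinarith

end RankingSystem
/-- for `y_C(t) < y < 1`, the random initial position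
`ŷ^{(N)}(y,t) = inf{y_{i,0} : Y_i(t) > y}` converges in probability (restricted to the
event `y > y_C^{(N)}(t)`) to the deterministic value `ŷ(y,t)`. -/
theorem stmt19
    (Ω : Type) [MeasureSpace Ω] [IsProbabilityMeasure (ℙ : Measure Ω)]
    (R : (N : ℕ) → RankingSystem Ω N)
    (μ0 : ℝ → Measure ℝ≥0) (hμ0 : ∀ z, IsProbabilityMeasure (μ0 z))
    (hμ0meas : ∀ g : ℝ≥0 →ᵇ ℝ, AEMeasurable (fun z => ∫ x, g x ∂(μ0 z)) volume)
    (hinit : ∀ g : ℝ≥0 →ᵇ ℝ,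
      Tendsto (fun N : ℕ => ⨆ y : Ico (0 : ℝ) 1,
        |(N : ℝ)⁻¹ * (∑ i : Fin N, g ((R N).w i)
            * (if (R N).y0 i ≤ (y : ℝ) then (1 : ℝ) else 0))
          - ∫ z in (0 : ℝ)..(y : ℝ), ∫ x, g x ∂(μ0 z)|) atTop (𝓝 0))
    (lam : Measure ℝ≥0) [IsProbabilityMeasure lam]
    (hlam : ∀ s : Set ℝ≥0, MeasurableSet s →
      lam s = ∫⁻ y in Ico (0 : ℝ) 1, (μ0 y) s)
    (h0 : lam {0} = 0)
    (hmean : Integrable (fun x : ℝ≥0 => (x : ℝ)) lam)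
    (yC : ℝ → ℝ) (hyC : ∀ t : ℝ, yC t = 1 - ∫ x, rexp (-(x : ℝ) * t) ∂lam)
    (yCy : ℝ → ℝ → ℝ)
    (hyCy : ∀ y t : ℝ, yCy y t = 1 - ∫ z in y..1, ∫ x, rexp (-(x : ℝ) * t) ∂(μ0 z))
    (yhat : ℝ → ℝ → ℝ)
    (hyhat : ∀ t : ℝ, 0 < t → ∀ y ∈ Ico (yC t) 1,
      yhat y t ∈ Ico (0 : ℝ) 1 ∧ yCy (yhat y t) t = y)
    (t : ℝ) (ht : 0 < t) (y : ℝ) (hy0 : yC t < y) (hy1 : y < 1) :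
    ∀ ε > (0 : ℝ), Tendsto
      (fun N : ℕ => (ℙ : Measure Ω)
        {ω | (R N).yCN t ω < y ∧
          ε < |sInf {x : ℝ | ∃ i : Fin N, (R N).y0 i = x ∧ y < (R N).Y i t ω}
                - yhat y t|})
      atTop (𝓝 0) := by
  intro ε hε
  have ht0 : (0:ℝ) ≤ t := ht.le
  obtain ⟨hyhmem, hyheq⟩ := hyhat t ht y ⟨hy0.le, hy1⟩
  set yh := yhat y t with hyh
  obtain ⟨hyh0, hyh1⟩ := hyhmem
  -- the bounded continuous function x ↦ exp(-x t)
  set g : ℝ≥0 →ᵇ ℝ := expBCF t ht0 with hgdef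
  have hgm : AEMeasurable (fun z => ∫ x, g x ∂(μ0 z)) volume := hμ0meas g
  have hIg : (fun u : ℝ => ∫ x, g x ∂(μ0 u)) = (fun u : ℝ => ∫ x, rexp (-(x:ℝ) * t) ∂(μ0 u)) :=
    rfl
  set I : ℝ → ℝ := fun u => ∫ x, rexp (-(x:ℝ) * t) ∂(μ0 u) with hI
  have hgmI : AEMeasurable I volume := by rw [← hIg]; exact hgm
  have hII : ∀ a b : ℝ, IntervalIntegrable I volume a b :=
    fun a b => inner_intervalIntegrable μ0 t hμ0 ht0 hgmI a b
  set c : ℝ → ℝ := fun z => ∫ u in (0:ℝ)..z, I u with hc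
  set L : ℝ := ∫ u in (0:ℝ)..1, I u with hL
  have hsplit : ∀ z : ℝ, c z + (∫ u in z..(1:ℝ), I u) = L :=
    fun z => intervalIntegral.integral_add_adjacent_intervals (hII 0 z) (hII z 1)
  have hyCyI : ∀ z : ℝ, yCy z t = 1 - ∫ u in z..(1:ℝ), I u := fun z => hyCy z t
  -- positivity of y
  have hypos : 0 < y := by
    have hlam : ∫ x, rexp (-(x:ℝ) * t) ∂lam ≤ 1 :=
      inner_le_one (fun _ => lam) t (fun _ => inferInstance) ht0 0
    have := hyC t
    linarith [hy0]
  -- `1 - y` as a tail integral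
  have htail : 1 - y = ∫ u in yh..(1:ℝ), I u := by
    have := hyCyI yh
    rw [hyheq] at this
    linarith
  -- the value `L - c z` equals the tail integral from `z`
  have htailz : ∀ z : ℝ, L - c z = ∫ u in z..(1:ℝ), I u := by
    intro z
    have := hsplit z
    linarith
  -- convergence of the weighted empirical sums
  have hmeanz : ∀ z ∈ Set.Ico (0:ℝ) 1, Tendsto (fun N : ℕ =>
      (N:ℝ)⁻¹ * ∑ i : Fin N, (if (R N).y0 i ≤ z then (1:ℝ) else 0) * rexp (-((R N).w i : ℝ) * t))
      atTop (𝓝 (c z)) := by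
    intro z hz
    have h := mean_conv_at R μ0 hμ0 g (hinit g) hz
    apply h.congr
    intro N
    rw [Finset.mul_sum, Finset.mul_sum]
    apply Finset.sum_congr rfl
    intro i _
    have : g ((R N).w i) = rexp (-((R N).w i : ℝ) * t) := rfl
    rw [this]
    ring
  have hmeanU : Tendsto (fun N : ℕ =>
      (N:ℝ)⁻¹ * ∑ i : Fin N, (1:ℝ) * rexp (-((R N).w i : ℝ) * t)) atTop (𝓝 L) := by
    have h := mean_conv_full R μ0 hμ0 g (hinit g) hgm
    apply h.congr
    intro N
    congr 1
    apply Finset.sum_congr rfl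
    intro i _
    have : g ((R N).w i) = rexp (-((R N).w i : ℝ) * t) := rfl
    rw [this]
    ring
  -- LLN in probability for the empirical sums
  have hlnS : ∀ z ∈ Set.Ico (0:ℝ) 1, ∀ δ : ℝ, 0 < δ → Tendsto (fun N : ℕ => (ℙ : Measure Ω)
      {ω | δ ≤ |(N:ℝ)⁻¹ * ∑ i : Fin N, (if (R N).y0 i ≤ z then (1:ℝ) else 0)
        * (if t < (R N).τ i 1 ω then (1:ℝ) else 0) - c z|}) atTop (𝓝 0) := by
    intro z hz δ hδ
    exact lln_prob R ht0 (fun N i => if (R N).y0 i ≤ z then (1:ℝ) else 0)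
      (fun N i => by split <;> simp) (c z) (hmeanz z hz) hδ
  have hlnU : ∀ δ : ℝ, 0 < δ → Tendsto (fun N : ℕ => (ℙ : Measure Ω)
      {ω | δ ≤ |(N:ℝ)⁻¹ * ∑ i : Fin N, (1:ℝ)
        * (if t < (R N).τ i 1 ω then (1:ℝ) else 0) - L|}) atTop (𝓝 0) := by
    intro δ hδ
    exact lln_prob R ht0 (fun N i => (1:ℝ)) (fun N i => by norm_num) L hmeanU hδ
  -- lower deviation event
  have hlow : Tendsto (fun N : ℕ => (ℙ : Measure Ω)
      {ω | (R N).yCN t ω < y ∧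
        sInf {x : ℝ | ∃ i : Fin N, (R N).y0 i = x ∧ y < (R N).Y i t ω} < yh - ε})
      atTop (𝓝 0) := by
    by_cases hcase : ε ≤ yh
    · set z1 : ℝ := yh - ε with hz1def
      have hz1mem : z1 ∈ Set.Ico (0:ℝ) 1 := ⟨by linarith, by linarith⟩
      have hδ1pos : 0 < (L - c z1) - (1 - y) := by
        rw [htailz z1, htail]
        have hpos := inner_interval_pos μ0 t hμ0 ht0 hgmI (show z1 < yh by linarith)
        have hadd : (∫ u in z1..yh, I u) + (∫ u in yh..(1:ℝ), I u) = ∫ u in z1..(1:ℝ), I u :=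
          intervalIntegral.integral_add_adjacent_intervals (hII z1 yh) (hII yh 1)
        linarith
      set δ1 : ℝ := (L - c z1) - (1 - y) with hδ1def
      have hA := hlnS z1 hz1mem (δ1/2) (by linarith)
      have hB := hlnU (δ1/2) (by linarith)
      apply tendsto_of_tendsto_of_tendsto_of_le_of_le' tendsto_const_nhds
        (show Tendsto (fun N : ℕ =>
          (ℙ : Measure Ω) {ω | δ1/2 ≤ |(N:ℝ)⁻¹ * ∑ i : Fin N,
              (if (R N).y0 i ≤ z1 then (1:ℝ) else 0)
              * (if t < (R N).τ i 1 ω then (1:ℝ) else 0) - c z1|}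
          + (ℙ : Measure Ω) {ω | δ1/2 ≤ |(N:ℝ)⁻¹ * ∑ i : Fin N, (1:ℝ)
              * (if t < (R N).τ i 1 ω then (1:ℝ) else 0) - L|}) atTop (𝓝 0)
          from by simpa using hA.add hB)
        (Filter.Eventually.of_forall (fun N => zero_le)) ?_
      have hNev : ∀ᶠ N : ℕ in atTop, (N:ℝ)⁻¹ < 1 - y := by
        have hcv : Tendsto (fun N : ℕ => (N:ℝ)⁻¹) atTop (𝓝 0) :=
          tendsto_inv_atTop_zero.comp tendsto_natCast_atTop_atTop
        exact hcv.eventually_lt_const (by linarith)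
      filter_upwards [hNev, Filter.eventually_gt_atTop 0] with N hN1 hN2
      have hGN := (R N).good_event (t := t) ht0
      have hincl : {ω | (R N).yCN t ω < y ∧
            sInf {x : ℝ | ∃ i : Fin N, (R N).y0 i = x ∧ y < (R N).Y i t ω} < yh - ε}
          ⊆ ({ω | δ1/2 ≤ |(N:ℝ)⁻¹ * ∑ i : Fin N,
              (if (R N).y0 i ≤ z1 then (1:ℝ) else 0)
              * (if t < (R N).τ i 1 ω then (1:ℝ) else 0) - c z1|}
            ∪ {ω | δ1/2 ≤ |(N:ℝ)⁻¹ * ∑ i : Fin N, (1:ℝ)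
              * (if t < (R N).τ i 1 ω then (1:ℝ) else 0) - L|})
            ∪ {ω | ¬ ((∀ i, StrictMono fun j => (R N).τ i j ω)
              ∧ ∀ i : Fin N, ∃ j, t < (R N).τ i j ω)} := by
        intro ω hω
        obtain ⟨hω1, hω2⟩ := hω
        by_contra hno
        simp only [Set.mem_union, Set.mem_setOf_eq, not_or] at hno
        obtain ⟨⟨hnA, hnB⟩, hnG⟩ := hno
        obtain ⟨hmono, hesc⟩ := not_not.1 hnG
        have hnA' := abs_lt.1 (not_le.1 hnA)
        have hnB' := abs_lt.1 (not_le.1 hnB)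
        have hT : 1 - y < (N:ℝ)⁻¹ * ∑ i : Fin N, (1:ℝ)
            * (if t < (R N).τ i 1 ω then (1:ℝ) else 0)
            - (N:ℝ)⁻¹ * ∑ i : Fin N, (if (R N).y0 i ≤ z1 then (1:ℝ) else 0)
            * (if t < (R N).τ i 1 ω then (1:ℝ) else 0) := by
          obtain ⟨ha1, ha2⟩ := hnA'
          obtain ⟨hb1, hb2⟩ := hnB'
          linarith
        have hnm := (R N).not_mem_low ω ht0 hmono hesc hω1 z1 hT
        obtain ⟨it, hit1, hit2⟩ := (R N).exists_top ω ht0 hy1 hN2 hω1 hN1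
        have hSne : {x : ℝ | ∃ i : Fin N, (R N).y0 i = x ∧ y < (R N).Y i t ω}.Nonempty :=
          ⟨(R N).y0 it, it, rfl, hit2⟩
        have hlb : ∀ x ∈ {x : ℝ | ∃ i : Fin N, (R N).y0 i = x ∧ y < (R N).Y i t ω},
            z1 ≤ x := by
          rintro x ⟨i, rfl, hYi⟩
          by_contra hxx
          exact hnm i (le_of_lt (not_le.1 hxx)) hYi
        have hge := le_csInf hSne hlb
        linarith
      calc (ℙ : Measure Ω) {ω | (R N).yCN t ω < y ∧
            sInf {x : ℝ | ∃ i : Fin N, (R N).y0 i = x ∧ y < (R N).Y i t ω} < yh - ε}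
          ≤ (ℙ : Measure Ω) (({ω | δ1/2 ≤ |(N:ℝ)⁻¹ * ∑ i : Fin N,
              (if (R N).y0 i ≤ z1 then (1:ℝ) else 0)
              * (if t < (R N).τ i 1 ω then (1:ℝ) else 0) - c z1|}
            ∪ {ω | δ1/2 ≤ |(N:ℝ)⁻¹ * ∑ i : Fin N, (1:ℝ)
              * (if t < (R N).τ i 1 ω then (1:ℝ) else 0) - L|})
            ∪ {ω | ¬ ((∀ i, StrictMono fun j => (R N).τ i j ω)
              ∧ ∀ i : Fin N, ∃ j, t < (R N).τ i j ω)}) := measure_mono hincl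
        _ ≤ (ℙ : Measure Ω) ({ω | δ1/2 ≤ |(N:ℝ)⁻¹ * ∑ i : Fin N,
              (if (R N).y0 i ≤ z1 then (1:ℝ) else 0)
              * (if t < (R N).τ i 1 ω then (1:ℝ) else 0) - c z1|}
            ∪ {ω | δ1/2 ≤ |(N:ℝ)⁻¹ * ∑ i : Fin N, (1:ℝ)
              * (if t < (R N).τ i 1 ω then (1:ℝ) else 0) - L|})
            + (ℙ : Measure Ω) {ω | ¬ ((∀ i, StrictMono fun j => (R N).τ i j ω)
              ∧ ∀ i : Fin N, ∃ j, t < (R N).τ i j ω)} := measure_union_le _ _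
        _ = (ℙ : Measure Ω) ({ω | δ1/2 ≤ |(N:ℝ)⁻¹ * ∑ i : Fin N,
              (if (R N).y0 i ≤ z1 then (1:ℝ) else 0)
              * (if t < (R N).τ i 1 ω then (1:ℝ) else 0) - c z1|}
            ∪ {ω | δ1/2 ≤ |(N:ℝ)⁻¹ * ∑ i : Fin N, (1:ℝ)
              * (if t < (R N).τ i 1 ω then (1:ℝ) else 0) - L|}) := by
            rw [hGN, add_zero]
        _ ≤ _ := measure_union_le _ _
    · -- `yh < ε`: the lower event is empty
      push_neg at hcase
      have hempty : ∀ N : ℕ, {ω | (R N).yCN t ω < y ∧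
          sInf {x : ℝ | ∃ i : Fin N, (R N).y0 i = x ∧ y < (R N).Y i t ω} < yh - ε} = ∅ := by
        intro N
        ext ω
        simp only [Set.mem_setOf_eq, Set.mem_empty_iff_false, iff_false, not_and]
        intro _
        have h0 : 0 ≤ sInf {x : ℝ | ∃ i : Fin N, (R N).y0 i = x ∧ y < (R N).Y i t ω} := by
          apply Real.sInf_nonneg
          rintro x ⟨i, rfl, _⟩
          exact (R N).y0_nonneg i
        push_neg
        linarith
      simp only [hempty, measure_empty]
      exact tendsto_const_nhds
  -- upper deviation event
  have hup : Tendsto (fun N : ℕ => (ℙ : Measure Ω)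
      {ω | (R N).yCN t ω < y ∧
        yh + ε < sInf {x : ℝ | ∃ i : Fin N, (R N).y0 i = x ∧ y < (R N).Y i t ω}})
      atTop (𝓝 0) := by
    by_cases hcase : yh + ε < 1
    · set z2 : ℝ := yh + ε with hz2def
      have hz2mem : z2 ∈ Set.Ico (0:ℝ) 1 := ⟨by linarith, hcase⟩
      have hz2pos : 0 < z2 := by linarith
      have hδ2pos : 0 < (1 - y) - (L - c z2) := by
        rw [htailz z2, htail]
        have hpos := inner_interval_pos μ0 t hμ0 ht0 hgmI (show yh < z2 by linarith)
        have hadd : (∫ u in yh..z2, I u) + (∫ u in z2..(1:ℝ), I u) = ∫ u in yh..(1:ℝ), I u :=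
          intervalIntegral.integral_add_adjacent_intervals (hII yh z2) (hII z2 1)
        linarith
      set δ2 : ℝ := (1 - y) - (L - c z2) with hδ2def
      have hc2pos : 0 < c z2 := inner_interval_pos μ0 t hμ0 ht0 hgmI hz2pos
      set δm : ℝ := min (δ2/4) (c z2 / 2) with hδmdef
      have hδmpos : 0 < δm := lt_min (by linarith) (by linarith)
      have hδm1 : δm ≤ δ2/4 := min_le_left _ _
      have hδm2 : δm ≤ c z2 / 2 := min_le_right _ _
      have hC := hlnS z2 hz2mem δm hδmpos
      have hD := hlnU (δ2/4) (by linarith)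
      apply tendsto_of_tendsto_of_tendsto_of_le_of_le' tendsto_const_nhds
        (show Tendsto (fun N : ℕ =>
          (ℙ : Measure Ω) {ω | δm ≤ |(N:ℝ)⁻¹ * ∑ i : Fin N,
              (if (R N).y0 i ≤ z2 then (1:ℝ) else 0)
              * (if t < (R N).τ i 1 ω then (1:ℝ) else 0) - c z2|}
          + (ℙ : Measure Ω) {ω | δ2/4 ≤ |(N:ℝ)⁻¹ * ∑ i : Fin N, (1:ℝ)
              * (if t < (R N).τ i 1 ω then (1:ℝ) else 0) - L|}) atTop (𝓝 0)
          from by simpa using hC.add hD)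
        (Filter.Eventually.of_forall (fun N => zero_le)) ?_
      have hNev : ∀ᶠ N : ℕ in atTop, (N:ℝ)⁻¹ < δ2/2 := by
        have hcv : Tendsto (fun N : ℕ => (N:ℝ)⁻¹) atTop (𝓝 0) :=
          tendsto_inv_atTop_zero.comp tendsto_natCast_atTop_atTop
        exact hcv.eventually_lt_const (by linarith)
      filter_upwards [hNev] with N hN1
      have hGN := (R N).good_event (t := t) ht0
      have hincl : {ω | (R N).yCN t ω < y ∧
            yh + ε < sInf {x : ℝ | ∃ i : Fin N, (R N).y0 i = x ∧ y < (R N).Y i t ω}}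
          ⊆ ({ω | δm ≤ |(N:ℝ)⁻¹ * ∑ i : Fin N,
              (if (R N).y0 i ≤ z2 then (1:ℝ) else 0)
              * (if t < (R N).τ i 1 ω then (1:ℝ) else 0) - c z2|}
            ∪ {ω | δ2/4 ≤ |(N:ℝ)⁻¹ * ∑ i : Fin N, (1:ℝ)
              * (if t < (R N).τ i 1 ω then (1:ℝ) else 0) - L|})
            ∪ {ω | ¬ ((∀ i, StrictMono fun j => (R N).τ i j ω)
              ∧ ∀ i : Fin N, ∃ j, t < (R N).τ i j ω)} := by
        intro ω hω
        obtain ⟨hω1, hω2⟩ := hω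
        by_contra hno
        simp only [Set.mem_union, Set.mem_setOf_eq, not_or] at hno
        obtain ⟨⟨hnC, hnD⟩, hnG⟩ := hno
        have hnC' := abs_lt.1 (not_le.1 hnC)
        have hnD' := abs_lt.1 (not_le.1 hnD)
        obtain ⟨hc1, hc2⟩ := hnC'
        obtain ⟨hd1, hd2⟩ := hnD'
        have hSpos : 0 < (N:ℝ)⁻¹ * ∑ i : Fin N, (if (R N).y0 i ≤ z2 then (1:ℝ) else 0)
            * (if t < (R N).τ i 1 ω then (1:ℝ) else 0) := by linarith
        have hT2 : (N:ℝ)⁻¹ * ∑ i : Fin N, (1:ℝ)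
            * (if t < (R N).τ i 1 ω then (1:ℝ) else 0)
            - (N:ℝ)⁻¹ * ∑ i : Fin N, (if (R N).y0 i ≤ z2 then (1:ℝ) else 0)
            * (if t < (R N).τ i 1 ω then (1:ℝ) else 0) < 1 - y - (N:ℝ)⁻¹ := by
          linarith
        obtain ⟨ih, hihz, hihY⟩ := (R N).exists_high ω ht0 z2 hSpos hT2
        have hbdd : BddBelow {x : ℝ | ∃ i : Fin N, (R N).y0 i = x ∧ y < (R N).Y i t ω} := by
          refine ⟨0, ?_⟩
          rintro x ⟨i, rfl, _⟩
          exact (R N).y0_nonneg i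
        have hle := csInf_le hbdd (⟨ih, rfl, hihY⟩ :
          (R N).y0 ih ∈ {x : ℝ | ∃ i : Fin N, (R N).y0 i = x ∧ y < (R N).Y i t ω})
        linarith
      calc (ℙ : Measure Ω) {ω | (R N).yCN t ω < y ∧
            yh + ε < sInf {x : ℝ | ∃ i : Fin N, (R N).y0 i = x ∧ y < (R N).Y i t ω}}
          ≤ (ℙ : Measure Ω) (({ω | δm ≤ |(N:ℝ)⁻¹ * ∑ i : Fin N,
              (if (R N).y0 i ≤ z2 then (1:ℝ) else 0)
              * (if t < (R N).τ i 1 ω then (1:ℝ) else 0) - c z2|}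
            ∪ {ω | δ2/4 ≤ |(N:ℝ)⁻¹ * ∑ i : Fin N, (1:ℝ)
              * (if t < (R N).τ i 1 ω then (1:ℝ) else 0) - L|})
            ∪ {ω | ¬ ((∀ i, StrictMono fun j => (R N).τ i j ω)
              ∧ ∀ i : Fin N, ∃ j, t < (R N).τ i j ω)}) := measure_mono hincl
        _ ≤ (ℙ : Measure Ω) ({ω | δm ≤ |(N:ℝ)⁻¹ * ∑ i : Fin N,
              (if (R N).y0 i ≤ z2 then (1:ℝ) else 0)
              * (if t < (R N).τ i 1 ω then (1:ℝ) else 0) - c z2|}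
            ∪ {ω | δ2/4 ≤ |(N:ℝ)⁻¹ * ∑ i : Fin N, (1:ℝ)
              * (if t < (R N).τ i 1 ω then (1:ℝ) else 0) - L|})
            + (ℙ : Measure Ω) {ω | ¬ ((∀ i, StrictMono fun j => (R N).τ i j ω)
              ∧ ∀ i : Fin N, ∃ j, t < (R N).τ i j ω)} := measure_union_le _ _
        _ = (ℙ : Measure Ω) ({ω | δm ≤ |(N:ℝ)⁻¹ * ∑ i : Fin N,
              (if (R N).y0 i ≤ z2 then (1:ℝ) else 0)
              * (if t < (R N).τ i 1 ω then (1:ℝ) else 0) - c z2|}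
            ∪ {ω | δ2/4 ≤ |(N:ℝ)⁻¹ * ∑ i : Fin N, (1:ℝ)
              * (if t < (R N).τ i 1 ω then (1:ℝ) else 0) - L|}) := by
            rw [hGN, add_zero]
        _ ≤ _ := measure_union_le _ _
    · -- `yh + ε ≥ 1`: the upper event is empty
      push_neg at hcase
      have hempty : ∀ N : ℕ, {ω | (R N).yCN t ω < y ∧
          yh + ε < sInf {x : ℝ | ∃ i : Fin N, (R N).y0 i = x ∧ y < (R N).Y i t ω}} = ∅ := by
        intro N
        ext ω
        simp only [Set.mem_setOf_eq, Set.mem_empty_iff_false, iff_false, not_and]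
        intro _
        push_neg
        rcases Set.eq_empty_or_nonempty
          {x : ℝ | ∃ i : Fin N, (R N).y0 i = x ∧ y < (R N).Y i t ω} with he | hne
        · rw [he, Real.sInf_empty]
          linarith
        · obtain ⟨x, i, hxi, hYi⟩ := hne
          have hbdd : BddBelow {x : ℝ | ∃ i : Fin N, (R N).y0 i = x ∧ y < (R N).Y i t ω} := by
            refine ⟨0, ?_⟩
            rintro x' ⟨i', rfl, _⟩
            exact (R N).y0_nonneg i'
          have hle := csInf_le hbdd (⟨i, hxi, hYi⟩ :
            x ∈ {x : ℝ | ∃ i : Fin N, (R N).y0 i = x ∧ y < (R N).Y i t ω})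
          have hx1 : x < 1 := hxi ▸ (R N).y0_lt_one i
          linarith
      simp only [hempty, measure_empty]
      exact tendsto_const_nhds
  -- combine the two deviation events
  apply tendsto_of_tendsto_of_tendsto_of_le_of_le' tendsto_const_nhds (by simpa using hlow.add hup)
    (Filter.Eventually.of_forall (fun N => zero_le))
  apply Filter.Eventually.of_forall
  intro N
  have hincl : {ω | (R N).yCN t ω < y ∧
        ε < |sInf {x : ℝ | ∃ i : Fin N, (R N).y0 i = x ∧ y < (R N).Y i t ω} - yh|}
      ⊆ {ω | (R N).yCN t ω < y ∧
          sInf {x : ℝ | ∃ i : Fin N, (R N).y0 i = x ∧ y < (R N).Y i t ω} < yh - ε}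
        ∪ {ω | (R N).yCN t ω < y ∧
          yh + ε < sInf {x : ℝ | ∃ i : Fin N, (R N).y0 i = x ∧ y < (R N).Y i t ω}} := by
    intro ω hω
    obtain ⟨h1, h2⟩ := hω
    rcases lt_abs.1 h2 with h | h
    · right
      exact ⟨h1, by linarith⟩
    · left
      exact ⟨h1, by linarith⟩
  exact le_trans (measure_mono hincl) (measure_union_le _ _)
end
end
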